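/- arXiv:2312.04658 — 6 statements merged into one kernel-verified Lean document; each statement's English description precedes it below -/
import Mathlib

section
/- Let (Ω, ℱ, ν) be a probability space, Θ a measurable parameter space with prior probability measure P, and let N ≥ 2 and 1 ≤ k ≤ N be integers; set a := (k−1)/(N−1). Let L : Θ × Ω → [0,1] be jointly measurable such that for every θ ∈ Θ the law of ω ↦ L(θ, ω) under ν is the Beta distribution with parameters (k, N+1−k). Then for every δ ∈ (0,1), with ν-probability at least 1 − δ over ω, simultaneously for all probability measures Q on Θ: (N−1) · kl( a ‖ ∫_Θ L(θ, ω) dQ(θ) ) ≤ KL(Q‖P) + log(B/δ), where B := a^{k−1} (1−a)^{N−k} · N! / ((k−1)! (N−k)!) is the density of the Beta(k, N+1−k) distribution evaluated at a. -/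
open MeasureTheory Real

/-- KL divergence between Bernoulli distributions with success probabilities `p` and `q`
(with the convention `0 * log 0 = 0`, which holds for `Real.log`). -/
noncomputable def bernKL (p q : ℝ) : ℝ :=
  p * Real.log (p / q) + (1 - p) * Real.log ((1 - p) / (1 - q))

open Classical in
/-- Kullback-Leibler divergence between measures: `∫ log (dQ/dP) dQ` when `Q ≪ P`
(and the log-likelihood ratio is integrable), `+∞` otherwise. -/
noncomputable def klDivE {Θ : Type*} [MeasurableSpace Θ] (Q P : Measure Θ) : EReal :=
  if Q ≪ P ∧ Integrable (llr Q P) Q then ((∫ θ, llr Q P θ ∂Q : ℝ) : EReal) else ⊤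

/-- The Beta distribution with integer parameters `(k, N + 1 - k)`, with density
`x^(k-1) (1-x)^(N-k) · N! / ((k-1)! (N-k)!)` on `(0, 1)`. -/
noncomputable def betaIntMeasure (N k : ℕ) : Measure ℝ :=
  volume.withDensity fun x =>
    ENNReal.ofReal <|
      if x ∈ Set.Ioo (0 : ℝ) 1 then
        x ^ (k - 1) * (1 - x) ^ (N - k) *
          ((N.factorial : ℝ) / ((k - 1).factorial * (N - k).factorial))
      else 0

/- ### Auxiliary lemmas -/

lemma exp_nat_mul_log (n : ℕ) (y : ℝ) (h : n = 0 ∨ 0 < y) :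
    Real.exp ((n : ℝ) * Real.log y) = y ^ n := by
  rcases h with h | h
  · subst h; simp
  · rw [Real.exp_nat_mul, Real.exp_log h]

lemma key_log_ineq {p s t : ℝ} (hp : 0 ≤ p) (hs : 0 < s) (ht : 0 < t) :
    (p / t) * (t - s) ≤ p * Real.log (p / s) - p * Real.log (p / t) := by
  rcases hp.lt_or_eq with hp' | hp'
  · have e1 : Real.log (p / s) - Real.log (p / t) = Real.log t - Real.log s := by
      rw [Real.log_div hp'.ne' hs.ne', Real.log_div hp'.ne' ht.ne']; ring
    have e2 : Real.log s - Real.log t ≤ (s - t) / t := by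
      have h := Real.log_le_sub_one_of_pos (div_pos hs ht)
      rw [Real.log_div hs.ne' ht.ne'] at h
      have h2 : s / t - 1 = (s - t) / t := by field_simp
      linarith
    have e3 : p * (Real.log s - Real.log t) ≤ p * ((s - t) / t) :=
      mul_le_mul_of_nonneg_left e2 hp
    have e4 : p * ((s - t) / t) = (p / t) * (s - t) := by ring
    have e5 : p * Real.log (p / s) - p * Real.log (p / t)
        = p * (Real.log t - Real.log s) := by
      rw [show p * Real.log (p / s) - p * Real.log (p / t)
          = p * (Real.log (p / s) - Real.log (p / t)) by ring, e1]
    nlinarith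
  · simp [← hp']

lemma bernKL_tangent {a m x : ℝ} (ha0 : 0 ≤ a) (ha1 : a ≤ 1)
    (hm : m ∈ Set.Ioo (0 : ℝ) 1) (hx : x ∈ Set.Ioo (0 : ℝ) 1) :
    bernKL a m + (-(a / m) + (1 - a) / (1 - m)) * (x - m) ≤ bernKL a x := by
  obtain ⟨hm0, hm1⟩ := hm
  obtain ⟨hx0, hx1⟩ := hx
  have h1m : 0 < 1 - m := by linarith
  have h1x : 0 < 1 - x := by linarith
  have c1 := key_log_ineq ha0 hx0 hm0
  have c2 := key_log_ineq (by linarith : (0:ℝ) ≤ 1 - a) h1x h1m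
  have expand : (-(a / m) + (1 - a) / (1 - m)) * (x - m)
      = (a / m) * (m - x) + ((1 - a) / (1 - m)) * ((1 - m) - (1 - x)) := by ring
  simp only [bernKL]
  linarith

lemma measurable_bernKL (a : ℝ) : Measurable (bernKL a) := by
  unfold bernKL
  exact ((Real.measurable_log.comp (measurable_const.div measurable_id)).const_mul a).add
    ((Real.measurable_log.comp
      (measurable_const.div (measurable_const.sub measurable_id))).const_mul (1 - a))

lemma exp_bernKL_eq (N k : ℕ) (hN : 2 ≤ N) (hk1 : 1 ≤ k) (hkN : k ≤ N)
    (a : ℝ) (ha : a = ((k : ℝ) - 1) / ((N : ℝ) - 1)) {x : ℝ}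
    (hx : x ∈ Set.Ioo (0 : ℝ) 1) :
    Real.exp (((N : ℝ) - 1) * bernKL a x) * (x ^ (k - 1) * (1 - x) ^ (N - k))
      = a ^ (k - 1) * (1 - a) ^ (N - k) := by
  obtain ⟨hx0, hx1⟩ := hx
  have h1x : 0 < 1 - x := by linarith
  have hN1 : (0 : ℝ) < (N : ℝ) - 1 := by
    have : (2 : ℝ) ≤ (N : ℝ) := by exact_mod_cast hN
    linarith
  have hk1' : (1 : ℝ) ≤ (k : ℝ) := by exact_mod_cast hk1
  have hkN' : (k : ℝ) ≤ (N : ℝ) := by exact_mod_cast hkN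
  have hca : ((N : ℝ) - 1) * a = ((k - 1 : ℕ) : ℝ) := by
    rw [ha, Nat.cast_sub hk1]
    push_cast
    field_simp
  have hcb : ((N : ℝ) - 1) * (1 - a) = ((N - k : ℕ) : ℝ) := by
    rw [ha, Nat.cast_sub hkN]
    field_simp
    ring
  have hrw : ((N : ℝ) - 1) * bernKL a x
      = ((k - 1 : ℕ) : ℝ) * Real.log (a / x) + ((N - k : ℕ) : ℝ) * Real.log ((1 - a) / (1 - x)) := by
    simp only [bernKL]
    rw [← hca, ← hcb]; ring
  have side1 : k - 1 = 0 ∨ 0 < a / x := by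
    rcases Nat.lt_or_ge 1 k with h | h
    · right
      apply div_pos _ hx0
      rw [ha]
      apply div_pos _ hN1
      have : (1 : ℝ) < (k : ℝ) := by exact_mod_cast h
      linarith
    · left; omega
  have side2 : N - k = 0 ∨ 0 < (1 - a) / (1 - x) := by
    rcases Nat.lt_or_ge k N with h | h
    · right
      apply div_pos _ h1x
      have hkN2 : (k : ℝ) < (N : ℝ) := by exact_mod_cast h
      have : a < 1 := by
        rw [ha, div_lt_one hN1]; linarith
      linarith
    · left; omega
  rw [hrw, Real.exp_add, exp_nat_mul_log _ _ side1, exp_nat_mul_log _ _ side2,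
    div_pow, div_pow]
  have hxk : (x : ℝ) ^ (k - 1) ≠ 0 := pow_ne_zero _ hx0.ne'
  have hxN : (1 - x : ℝ) ^ (N - k) ≠ 0 := pow_ne_zero _ h1x.ne'
  field_simp

/-- Donsker–Varadhan style change-of-measure bound. -/
lemma dv_bound {Θ : Type*} [MeasurableSpace Θ] (Q P : Measure Θ)
    [IsProbabilityMeasure Q] [IsProbabilityMeasure P]
    (hQP : Q ≪ P) (hllr : Integrable (llr Q P) Q)
    (g : Θ → ℝ) (hg : Measurable g) (hgi : Integrable g Q)
    (R : ℝ) (hR : 0 < R)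
    (hI : ∫⁻ θ, ENNReal.ofReal (Real.exp (g θ)) ∂P ≤ ENNReal.ofReal R) :
    ∫ θ, g θ ∂Q ≤ ∫ θ, llr Q P θ ∂Q + Real.log R := by
  set h : Θ → ℝ := fun θ => g θ - llr Q P θ with hh
  have hh_meas : Measurable h := hg.sub (measurable_llr Q P)
  have hh_int : Integrable h Q := hgi.sub hllr
  have hexp_lint : ∫⁻ θ, ENNReal.ofReal (Real.exp (h θ)) ∂Q ≤ ENNReal.ofReal R := by
    have hrw : ∫⁻ θ, ENNReal.ofReal (Real.exp (h θ)) ∂Q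
        = ∫⁻ θ, (Q.rnDeriv P * fun θ => ENNReal.ofReal (Real.exp (h θ))) θ ∂P := by
      conv_lhs => rw [← Measure.withDensity_rnDeriv_eq Q P hQP]
      exact lintegral_withDensity_eq_lintegral_mul P (Measure.measurable_rnDeriv Q P)
        (ENNReal.measurable_ofReal.comp hh_meas.exp)
    rw [hrw]
    refine le_trans (lintegral_mono_ae ?_) hI
    filter_upwards [Measure.rnDeriv_lt_top Q P] with θ hθ
    simp only [Pi.mul_apply]
    rcases eq_or_ne (Q.rnDeriv P θ) 0 with h0 | h0
    · simp [h0]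
    · have htR : 0 < (Q.rnDeriv P θ).toReal := ENNReal.toReal_pos h0 hθ.ne
      have hrw2 : Real.exp (h θ) = Real.exp (g θ) / (Q.rnDeriv P θ).toReal := by
        rw [hh]
        simp only []
        rw [Real.exp_sub]
        congr 1
        exact Real.exp_log htR
      rw [hrw2, ENNReal.ofReal_div_of_pos htR, ENNReal.ofReal_toReal hθ.ne]
      exact ENNReal.mul_div_le
  have hexp_int : Integrable (fun θ => Real.exp (h θ)) Q :=
    ⟨(hh_meas.exp).aestronglyMeasurable,
      (hasFiniteIntegral_iff_ofReal
        (Filter.Eventually.of_forall fun θ => (Real.exp_pos _).le)).mpr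
        (lt_of_le_of_lt hexp_lint ENNReal.ofReal_lt_top)⟩
  have hjensen : Real.exp (∫ θ, h θ ∂Q) ≤ ∫ θ, Real.exp (h θ) ∂Q :=
    convexOn_exp.map_integral_le Real.continuous_exp.continuousOn isClosed_univ
      (Filter.Eventually.of_forall fun _ => Set.mem_univ _) hh_int hexp_int
  have hpos : 0 < ∫ θ, Real.exp (h θ) ∂Q := lt_of_lt_of_le (Real.exp_pos _) hjensen
  have hintR : ∫ θ, Real.exp (h θ) ∂Q ≤ R := by
    rw [integral_eq_lintegral_of_nonneg_ae
      (Filter.Eventually.of_forall fun θ => (Real.exp_pos (h θ)).le)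
      (hh_meas.exp).aestronglyMeasurable]
    calc (∫⁻ θ, ENNReal.ofReal (Real.exp (h θ)) ∂Q).toReal
        ≤ (ENNReal.ofReal R).toReal := ENNReal.toReal_mono ENNReal.ofReal_ne_top hexp_lint
      _ = R := ENNReal.toReal_ofReal hR.le
  have hlog : ∫ θ, h θ ∂Q ≤ Real.log R :=
    le_trans ((Real.le_log_iff_exp_le hpos).mpr hjensen) (Real.log_le_log hpos hintR)
  have hsub : ∫ θ, h θ ∂Q = ∫ θ, g θ ∂Q - ∫ θ, llr Q P θ ∂Q := integral_sub hgi hllr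
  linarith

/-- Abstract form of the PAC-Bayes coverage bound (Theorem 1): uniform-over-posteriors
bound for Beta-distributed miscoverages. -/
theorem pac_bayes_beta_miscoverage_bound
    {Ω Θ : Type*} [MeasurableSpace Ω] [MeasurableSpace Θ]
    (ν : Measure Ω) [IsProbabilityMeasure ν]
    (P : Measure Θ) [IsProbabilityMeasure P]
    (N k : ℕ) (hN : 2 ≤ N) (hk1 : 1 ≤ k) (hkN : k ≤ N)
    (a : ℝ) (ha : a = ((k : ℝ) - 1) / ((N : ℝ) - 1))
    (L : Θ → Ω → ℝ) (hL : Measurable (Function.uncurry L))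
    (hL01 : ∀ θ ω, L θ ω ∈ Set.Icc (0 : ℝ) 1)
    (hBeta : ∀ θ : Θ, ν.map (L θ) = betaIntMeasure N k)
    (δ : ℝ) (hδ : δ ∈ Set.Ioo (0 : ℝ) 1)
    (B : ℝ)
    (hB : B = a ^ (k - 1) * (1 - a) ^ (N - k) *
      ((N.factorial : ℝ) / ((k - 1).factorial * (N - k).factorial))) :
    ENNReal.ofReal (1 - δ) ≤
      ν {ω | ∀ Q : Measure Θ, IsProbabilityMeasure Q →
        ((((N : ℝ) - 1) * bernKL a (∫ θ, L θ ω ∂Q) : ℝ) : EReal) ≤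
          klDivE Q P + (Real.log (B / δ) : EReal)} := by
  -- basic numeric facts
  have hN1 : (0 : ℝ) < (N : ℝ) - 1 := by
    have : (2 : ℝ) ≤ (N : ℝ) := by exact_mod_cast hN
    linarith
  have hk1' : (1 : ℝ) ≤ (k : ℝ) := by exact_mod_cast hk1
  have hkN' : (k : ℝ) ≤ (N : ℝ) := by exact_mod_cast hkN
  have ha0 : 0 ≤ a := ha ▸ div_nonneg (by linarith) hN1.le
  have ha1 : a ≤ 1 := by rw [ha, div_le_one hN1]; linarith
  have hBpos : 0 < B := by
    rw [hB]
    have h1 : 0 < a ^ (k - 1) := by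
      rcases Nat.lt_or_ge 1 k with h | h
      · apply pow_pos
        rw [ha]
        apply div_pos _ hN1
        have : (1 : ℝ) < (k : ℝ) := by exact_mod_cast h
        linarith
      · have hk : k = 1 := le_antisymm h hk1
        simp [hk]
    have h2 : 0 < (1 - a) ^ (N - k) := by
      rcases Nat.lt_or_ge k N with h | h
      · apply pow_pos
        have hkN2 : (k : ℝ) < (N : ℝ) := by exact_mod_cast h
        have : a < 1 := by rw [ha, div_lt_one hN1]; linarith
        linarith
      · have hk : k = N := le_antisymm hkN h
        simp [hk]
    have h3 : 0 < (N.factorial : ℝ) / ((k - 1).factorial * (N - k).factorial) := by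
      apply div_pos
      · exact_mod_cast N.factorial_pos
      · have h4 : (0 : ℝ) < ((k - 1).factorial : ℝ) := by exact_mod_cast (k - 1).factorial_pos
        have h5 : (0 : ℝ) < ((N - k).factorial : ℝ) := by exact_mod_cast (N - k).factorial_pos
        exact mul_pos h4 h5
    exact mul_pos (mul_pos h1 h2) h3
  have hδ0 : 0 < δ := hδ.1
  have hR : 0 < B / δ := div_pos hBpos hδ0
  -- the moment generating function and density
  set D : ℝ → ENNReal := fun x =>
    ENNReal.ofReal <|
      if x ∈ Set.Ioo (0 : ℝ) 1 then
        x ^ (k - 1) * (1 - x) ^ (N - k) *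
          ((N.factorial : ℝ) / ((k - 1).factorial * (N - k).factorial))
      else 0 with hD_def
  have hD_meas : Measurable D := by
    apply ENNReal.measurable_ofReal.comp
    apply Measurable.ite measurableSet_Ioo _ measurable_const
    apply Measurable.mul
    · exact (measurable_id.pow_const _).mul ((measurable_const.sub measurable_id).pow_const _)
    · exact measurable_const
  set F : ℝ → ENNReal := fun x => ENNReal.ofReal (Real.exp (((N : ℝ) - 1) * bernKL a x))
    with hF_def
  have hF_meas : Measurable F :=
    ENNReal.measurable_ofReal.comp (((measurable_bernKL a).const_mul _).exp)
  have hLθ_meas : ∀ θ, Measurable (L θ) := fun θ => hL.comp measurable_prodMk_left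
  -- Step 1: for each θ, the exponential moment is exactly B
  have step1 : ∀ θ, ∫⁻ ω, F (L θ ω) ∂ν = ENNReal.ofReal B := by
    intro θ
    calc ∫⁻ ω, F (L θ ω) ∂ν = ∫⁻ x, F x ∂(ν.map (L θ)) :=
          (lintegral_map hF_meas (hLθ_meas θ)).symm
      _ = ∫⁻ x, F x ∂(betaIntMeasure N k) := by rw [hBeta]
      _ = ∫⁻ x, (D * F) x ∂volume := by
          rw [betaIntMeasure]
          exact lintegral_withDensity_eq_lintegral_mul volume hD_meas hF_meas
      _ = ∫⁻ x, Set.indicator (Set.Ioo (0 : ℝ) 1) (fun _ => ENNReal.ofReal B) x ∂volume := by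
          apply lintegral_congr
          intro x
          by_cases hx : x ∈ Set.Ioo (0 : ℝ) 1
          · rw [Set.indicator_of_mem hx]
            simp only [Pi.mul_apply, hD_def, hF_def, if_pos hx]
            have hDx : 0 ≤ x ^ (k - 1) * (1 - x) ^ (N - k) *
                ((N.factorial : ℝ) / ((k - 1).factorial * (N - k).factorial)) := by
              have hx0 := hx.1
              have hx1 := hx.2
              have : (0:ℝ) ≤ (N.factorial : ℝ) / ((k - 1).factorial * (N - k).factorial) := by
                positivity
              have hxp : (0:ℝ) ≤ x ^ (k-1) := by positivity
              have hxq : (0:ℝ) ≤ (1-x) ^ (N-k) := by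
                apply pow_nonneg; linarith
              positivity
            rw [← ENNReal.ofReal_mul hDx]
            congr 1
            have hident := exp_bernKL_eq N k hN hk1 hkN a ha hx
            calc x ^ (k - 1) * (1 - x) ^ (N - k) *
                  ((N.factorial : ℝ) / ((k - 1).factorial * (N - k).factorial)) *
                  Real.exp (((N : ℝ) - 1) * bernKL a x)
                = Real.exp (((N : ℝ) - 1) * bernKL a x) * (x ^ (k - 1) * (1 - x) ^ (N - k)) *
                  ((N.factorial : ℝ) / ((k - 1).factorial * (N - k).factorial)) := by ring
              _ = a ^ (k - 1) * (1 - a) ^ (N - k) *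
                  ((N.factorial : ℝ) / ((k - 1).factorial * (N - k).factorial)) := by
                  rw [hident]
              _ = B := hB.symm
          · rw [Set.indicator_of_notMem hx]
            simp only [Pi.mul_apply, hD_def, if_neg hx, ENNReal.ofReal_zero, zero_mul]
      _ = ENNReal.ofReal B := by
          rw [lintegral_indicator measurableSet_Ioo, setLIntegral_const, Real.volume_Ioo]
          simp
  -- Step 2: Fubini and Markov
  have hjoint : Measurable (fun p : Ω × Θ => F (L p.2 p.1)) :=
    hF_meas.comp (hL.comp measurable_swap)
  set G : Ω → ENNReal := fun ω => ∫⁻ θ, F (L θ ω) ∂P with hG_def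
  have hG_meas : Measurable G := hjoint.lintegral_prod_right'
  have hGint : ∫⁻ ω, G ω ∂ν = ENNReal.ofReal B := by
    rw [hG_def]
    rw [lintegral_lintegral_swap hjoint.aemeasurable]
    simp_rw [step1]
    simp [lintegral_const]
  have hmark : ν {ω | ENNReal.ofReal (B / δ) ≤ G ω} ≤ ENNReal.ofReal δ := by
    have hmk := meas_ge_le_lintegral_div (μ := ν) hG_meas.aemeasurable
      (ε := ENNReal.ofReal (B / δ)) (ne_of_gt (ENNReal.ofReal_pos.mpr hR))
      ENNReal.ofReal_ne_top
    rw [hGint] at hmk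
    calc ν {ω | ENNReal.ofReal (B / δ) ≤ G ω}
        ≤ ENNReal.ofReal B / ENNReal.ofReal (B / δ) := hmk
      _ = ENNReal.ofReal (B / (B / δ)) := (ENNReal.ofReal_div_of_pos hR).symm
      _ = ENNReal.ofReal δ := by
          congr 1
          field_simp
  -- Step 3: the a.e. support event
  set T : Set (Ω × Θ) := {p | L p.2 p.1 ∉ Set.Ioo (0 : ℝ) 1} with hT_def
  have hT_meas : MeasurableSet T :=
    ((hL.comp measurable_swap) measurableSet_Ioo).compl
  have hbeta0 : betaIntMeasure N k (Set.Ioo (0 : ℝ) 1)ᶜ = 0 := by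
    rw [betaIntMeasure, withDensity_apply _ measurableSet_Ioo.compl]
    have hz : ∀ x ∈ (Set.Ioo (0 : ℝ) 1)ᶜ,
        (fun x => ENNReal.ofReal <|
          if x ∈ Set.Ioo (0 : ℝ) 1 then
            x ^ (k - 1) * (1 - x) ^ (N - k) *
              ((N.factorial : ℝ) / ((k - 1).factorial * (N - k).factorial))
          else 0) x = (fun _ => (0 : ENNReal)) x := by
      intro x hx
      rw [Set.mem_compl_iff] at hx
      simp only [if_neg hx, ENNReal.ofReal_zero]
    rw [setLIntegral_congr_fun measurableSet_Ioo.compl hz]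
    simp
  have hT0 : (ν.prod P) T = 0 := by
    rw [← Measure.prod_swap, Measure.map_apply measurable_swap hT_meas,
      Measure.prod_apply (measurable_swap hT_meas)]
    have hsec : ∀ θ, ν (Prod.mk θ ⁻¹' (Prod.swap ⁻¹' T)) = 0 := by
      intro θ
      have : Prod.mk θ ⁻¹' (Prod.swap ⁻¹' T) = L θ ⁻¹' (Set.Ioo (0 : ℝ) 1)ᶜ := rfl
      rw [this, ← Measure.map_apply (hLθ_meas θ) measurableSet_Ioo.compl, hBeta θ, hbeta0]
    simp [hsec]
  have hE0 : ∀ᵐ ω ∂ν, P (Prod.mk ω ⁻¹' T) = 0 :=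
    (Measure.measure_prod_null hT_meas).mp hT0
  -- the good event
  set S : Set Ω := {ω | G ω ≤ ENNReal.ofReal (B / δ)} ∩ {ω | P (Prod.mk ω ⁻¹' T) = 0}
    with hS_def
  have hS_meas : MeasurableSet S := by
    apply MeasurableSet.inter
    · exact hG_meas measurableSet_Iic
    · exact (measurable_measure_prodMk_left hT_meas) (measurableSet_singleton 0)
  have hSc : ν Sᶜ ≤ ENNReal.ofReal δ := by
    rw [hS_def, Set.compl_inter]
    refine le_trans (measure_union_le _ _) ?_
    have h1 : ν {ω | G ω ≤ ENNReal.ofReal (B / δ)}ᶜ ≤ ENNReal.ofReal δ := by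
      refine le_trans (measure_mono ?_) hmark
      intro ω hω
      simp only [Set.mem_compl_iff, Set.mem_setOf_eq, not_le] at hω
      exact le_of_lt hω
    have h2 : ν {ω | P (Prod.mk ω ⁻¹' T) = 0}ᶜ = 0 := by
      rw [ae_iff] at hE0
      exact hE0
    rw [h2, add_zero]
    exact h1
  have hνS : ENNReal.ofReal (1 - δ) ≤ ν S := by
    have hadd : ν S + ν Sᶜ = 1 := by
      rw [measure_add_measure_compl hS_meas, measure_univ]
    have h1 : (1 : ENNReal) - ν Sᶜ ≤ ν S := by
      rw [tsub_le_iff_right]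
      rw [hadd]
    have h2 : ENNReal.ofReal (1 - δ) ≤ 1 - ν Sᶜ := by
      rw [ENNReal.ofReal_sub _ hδ0.le, ENNReal.ofReal_one]
      exact tsub_le_tsub_left hSc 1
    exact le_trans h2 h1
  refine le_trans hνS (measure_mono ?_)
  -- Step 4: the pointwise argument on the good event
  intro ω hω
  obtain ⟨hωG, hωE⟩ := hω
  intro Q hQprob
  haveI := hQprob
  by_cases hcase : Q ≪ P ∧ Integrable (llr Q P) Q
  · obtain ⟨hQP, hllr⟩ := hcase
    have hPae : ∀ᵐ θ ∂P, L θ ω ∈ Set.Ioo (0 : ℝ) 1 := by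
      rw [ae_iff]
      exact hωE
    have hQae : ∀ᵐ θ ∂Q, L θ ω ∈ Set.Ioo (0 : ℝ) 1 := by
      rw [ae_iff]
      exact hQP hωE
    have hℓ_meas : Measurable (fun θ => L θ ω) :=
      hL.comp (measurable_id.prodMk measurable_const)
    have hℓ_int : Integrable (fun θ => L θ ω) Q := by
      refine Integrable.mono' (integrable_const 1) hℓ_meas.aestronglyMeasurable ?_
      refine Filter.Eventually.of_forall fun θ => ?_
      rw [Real.norm_eq_abs, abs_le]
      exact ⟨by linarith [(hL01 θ ω).1], (hL01 θ ω).2⟩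
    set m := ∫ θ, L θ ω ∂Q with hm_def
    have hQne : (ae Q).NeBot := ae_neBot.mpr (NeZero.ne Q)
    have hm_nonneg : 0 ≤ m := integral_nonneg fun θ => (hL01 θ ω).1
    have hm0 : 0 < m := by
      rcases hm_nonneg.lt_or_eq with h | h
      · exact h
      · exfalso
        have hz : (fun θ => L θ ω) =ᵐ[Q] 0 :=
          (integral_eq_zero_iff_of_nonneg_ae
            (Filter.Eventually.of_forall fun θ => (hL01 θ ω).1) hℓ_int).mp h.symm
        have hfalse : ∀ᵐ θ ∂Q, False := by
          filter_upwards [hz, hQae] with θ h1 h2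
          rw [Pi.zero_apply] at h1
          exact lt_irrefl _ (h1 ▸ h2.1)
        exact hQne.ne (Filter.eventually_false_iff_eq_bot.mp hfalse)
    have hm1 : m < 1 := by
      by_contra hcon
      push_neg at hcon
      have h1m : ∫ θ, (1 - L θ ω) ∂Q = 1 - m := by
        rw [integral_sub (integrable_const 1) hℓ_int, integral_const]
        simp [measure_univ, hm_def]
      have h1m_nonneg : 0 ≤ ∫ θ, (1 - L θ ω) ∂Q :=
        integral_nonneg fun θ => by
          show (0:ℝ) ≤ 1 - L θ ω
          linarith [(hL01 θ ω).2]
      have hz0 : ∫ θ, (1 - L θ ω) ∂Q = 0 := le_antisymm (by rw [h1m]; linarith) h1m_nonneg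
      have hu_nonneg : 0 ≤ᵐ[Q] fun θ => 1 - L θ ω :=
        Filter.Eventually.of_forall fun θ => by
          show (0:ℝ) ≤ 1 - L θ ω
          linarith [(hL01 θ ω).2]
      have hu_int : Integrable (fun θ => 1 - L θ ω) Q := (integrable_const 1).sub hℓ_int
      have hz' : (fun θ => 1 - L θ ω) =ᵐ[Q] 0 :=
        (integral_eq_zero_iff_of_nonneg_ae hu_nonneg hu_int).mp hz0
      have hfalse : ∀ᵐ θ ∂Q, False := by
        filter_upwards [hz', hQae] with θ h1 h2
        rw [Pi.zero_apply] at h1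
        linarith [h2.2]
      exact hQne.ne (Filter.eventually_false_iff_eq_bot.mp hfalse)
    have hmIoo : m ∈ Set.Ioo (0 : ℝ) 1 := ⟨hm0, hm1⟩
    -- the tangent function g
    set c : ℝ := ((N : ℝ) - 1) * (-(a / m) + (1 - a) / (1 - m)) with hc_def
    set g : Θ → ℝ := fun θ => ((N : ℝ) - 1) * bernKL a m + c * (L θ ω - m) with hg_def
    have hg_meas : Measurable g :=
      measurable_const.add ((hℓ_meas.sub measurable_const).const_mul c)
    have hg_int : Integrable g Q :=
      (integrable_const _).add ((hℓ_int.sub (integrable_const m)).const_mul c)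
    have hg_val : ∫ θ, g θ ∂Q = ((N : ℝ) - 1) * bernKL a m := by
      have h2 : Integrable (fun θ => L θ ω - m) Q := hℓ_int.sub (integrable_const m)
      have h1 : Integrable (fun θ => c * (L θ ω - m)) Q := h2.const_mul c
      simp only [hg_def]
      rw [integral_add (integrable_const _) h1, integral_const, integral_const_mul c,
        integral_sub hℓ_int (integrable_const m), integral_const]
      simp [measure_univ, ← hm_def]
    have hgf : ∀ᵐ θ ∂P, ENNReal.ofReal (Real.exp (g θ)) ≤ F (L θ ω) := by
      filter_upwards [hPae] with θ hθ
      apply ENNReal.ofReal_le_ofReal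
      apply Real.exp_le_exp.mpr
      have ht := bernKL_tangent ha0 ha1 hmIoo hθ
      have ht2 := mul_le_mul_of_nonneg_left ht hN1.le
      calc g θ = ((N : ℝ) - 1) *
            (bernKL a m + (-(a / m) + (1 - a) / (1 - m)) * (L θ ω - m)) := by
            rw [hg_def, hc_def]; ring
        _ ≤ ((N : ℝ) - 1) * bernKL a (L θ ω) := ht2
    have hI : ∫⁻ θ, ENNReal.ofReal (Real.exp (g θ)) ∂P ≤ ENNReal.ofReal (B / δ) :=
      le_trans (lintegral_mono_ae hgf) hωG
    have hdv := dv_bound Q P hQP hllr g hg_meas hg_int (B / δ) hR hI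
    rw [hg_val] at hdv
    show ((((N : ℝ) - 1) * bernKL a (∫ θ, L θ ω ∂Q) : ℝ) : EReal) ≤
      klDivE Q P + (Real.log (B / δ) : EReal)
    unfold klDivE
    rw [if_pos ⟨hQP, hllr⟩, ← EReal.coe_add]
    exact EReal.coe_le_coe_iff.mpr hdv
  · show ((((N : ℝ) - 1) * bernKL a (∫ θ, L θ ω ∂Q) : ℝ) : EReal) ≤
      klDivE Q P + (Real.log (B / δ) : EReal)
    unfold klDivE
    rw [if_neg hcase, EReal.top_add_coe]
    exact le_top
end

section
/- Let (Ω, ℱ, ν) be a probability space, Θ a measurable parameter space with prior probability measure P, and N ≥ 2, 1 ≤ k ≤ N integers; set q := (k−1)/(N−1) and B := q^{k−1}(1−q)^{N−k} · N!/((k−1)!(N−k)!). Let L : Θ × Ω → [0,1] be jointly measurable such that for every θ the law of L(θ, ·) under ν is Beta(k, N+1−k). Fix δ ∈ (0,1) and α ∈ (0,1) with q ≤ α. Then with ν-probability at least 1 − δ over ω, simultaneously every probability measure Q on Θ satisfying KL(Q‖P) ≤ (N−1)·kl(q ‖ α) − log(B/δ) also satisfies ∫_Θ L(θ, ω) dQ(θ)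 ≤ α. -/
open MeasureTheory Real

/-- Tangent-line lower bound for the Bernoulli KL divergence in its second argument. -/
lemma bernKL_tangent_s3 {q b x : ℝ} (hq0 : 0 ≤ q) (hq1 : q ≤ 1)
    (hb : b ∈ Set.Ioo (0:ℝ) 1) (hx : x ∈ Set.Ioo (0:ℝ) 1) :
    bernKL q b + (b - q) / (b * (1 - b)) * (x - b) ≤ bernKL q x := by
  obtain ⟨hb0, hb1⟩ := hb
  obtain ⟨hx0, hx1⟩ := hx
  have hb1' : (0:ℝ) < 1 - b := by linarith
  have hx1' : (0:ℝ) < 1 - x := by linarith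
  have hkey : bernKL q x - bernKL q b
      = q * Real.log (b / x) + (1 - q) * Real.log ((1 - b) / (1 - x)) := by
    have h1 : q * Real.log (q / x) - q * Real.log (q / b) = q * Real.log (b / x) := by
      rcases eq_or_lt_of_le hq0 with h | h
      · simp [← h]
      · rw [← mul_sub, ← Real.log_div (by positivity) (by positivity)]
        congr 2
        field_simp
    have h2 : (1 - q) * Real.log ((1 - q) / (1 - x)) - (1 - q) * Real.log ((1 - q) / (1 - b))
        = (1 - q) * Real.log ((1 - b) / (1 - x)) := by
      rcases eq_or_lt_of_le hq1 with h | h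
      · simp [h]
      · have hq1'' : (0:ℝ) < 1 - q := by linarith
        rw [← mul_sub, ← Real.log_div (by positivity) (by positivity)]
        congr 2
        field_simp
    unfold bernKL
    linarith [h1, h2]
  have hlog1 : (b - x) / b ≤ Real.log (b / x) := by
    have h := Real.log_le_sub_one_of_pos (show (0:ℝ) < x / b by positivity)
    have e : Real.log (b / x) = - Real.log (x / b) := by
      rw [← Real.log_inv]; congr 1; field_simp
    rw [e]
    have e2 : (b - x) / b = -(x / b - 1) := by field_simp; ring
    rw [e2]
    linarith
  have hlog2 : (x - b) / (1 - b) ≤ Real.log ((1 - b) / (1 - x)) := by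
    have h := Real.log_le_sub_one_of_pos (show (0:ℝ) < (1 - x) / (1 - b) by positivity)
    have e : Real.log ((1 - b) / (1 - x)) = - Real.log ((1 - x) / (1 - b)) := by
      rw [← Real.log_inv]; congr 1; field_simp
    rw [e]
    have e2 : (x - b) / (1 - b) = -((1 - x) / (1 - b) - 1) := by field_simp; ring
    rw [e2]
    linarith
  have m1 := mul_le_mul_of_nonneg_left hlog1 hq0
  have m2 := mul_le_mul_of_nonneg_left hlog2 (by linarith : (0:ℝ) ≤ 1 - q)
  have halg : q * ((b - x) / b) + (1 - q) * ((x - b) / (1 - b))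
      = (b - q) / (b * (1 - b)) * (x - b) := by
    field_simp
    ring
  linarith

/-- Nonnegativity of the KL divergence (Gibbs' inequality). -/
lemma gibbs_nonneg {α : Type*} [MeasurableSpace α] {Q μ : Measure α}
    [IsProbabilityMeasure Q] [IsProbabilityMeasure μ]
    (hQμ : Q ≪ μ) (hint : Integrable (llr Q μ) Q) :
    0 ≤ ∫ x, llr Q μ x ∂Q := by
  set g : α → ℝ := fun x => 1 - llr Q μ x with hg
  have hgint : Integrable g Q := (integrable_const (1:ℝ)).sub hint
  have hpos : ∀ᵐ x ∂Q, 0 < Q.rnDeriv μ x := Measure.rnDeriv_pos hQμ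
  have hfin : ∀ᵐ x ∂Q, Q.rnDeriv μ x < ⊤ := hQμ.ae_le (Measure.rnDeriv_lt_top Q μ)
  have hbound : ∀ᵐ x ∂Q, ENNReal.ofReal (g x) ≤ (Q.rnDeriv μ x)⁻¹ := by
    filter_upwards [hpos, hfin] with x h0 h1
    have hr : 0 < (Q.rnDeriv μ x).toReal := ENNReal.toReal_pos h0.ne' h1.ne
    have hlog := Real.log_le_sub_one_of_pos (show 0 < ((Q.rnDeriv μ x).toReal)⁻¹ by positivity)
    rw [Real.log_inv] at hlog
    have : g x ≤ ((Q.rnDeriv μ x).toReal)⁻¹ := by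
      simp only [hg, llr]
      linarith
    calc ENNReal.ofReal (g x) ≤ ENNReal.ofReal ((Q.rnDeriv μ x).toReal)⁻¹ :=
          ENNReal.ofReal_le_ofReal this
      _ = (Q.rnDeriv μ x)⁻¹ := by
          rw [ENNReal.ofReal_inv_of_pos hr, ENNReal.ofReal_toReal h1.ne]
  have hlint : ∫⁻ x, ENNReal.ofReal (g x) ∂Q ≤ 1 := by
    calc ∫⁻ x, ENNReal.ofReal (g x) ∂Q ≤ ∫⁻ x, (Q.rnDeriv μ x)⁻¹ ∂Q :=
          lintegral_mono_ae hbound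
      _ = ∫⁻ x, Q.rnDeriv μ x * (Q.rnDeriv μ x)⁻¹ ∂μ :=
          (lintegral_rnDeriv_mul hQμ (Measure.measurable_rnDeriv Q μ).inv.aemeasurable).symm
      _ ≤ ∫⁻ _, 1 ∂μ := lintegral_mono fun x => ENNReal.mul_inv_le_one _
      _ = 1 := by simp
  have hgle : ∫ x, g x ∂Q ≤ 1 := by
    rw [integral_eq_lintegral_pos_part_sub_lintegral_neg_part hgint]
    have h1 : (∫⁻ x, ENNReal.ofReal (g x) ∂Q).toReal ≤ 1 := by
      refine ENNReal.toReal_le_of_le_ofReal zero_le_one ?_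
      simpa using hlint
    have h2 : 0 ≤ (∫⁻ x, ENNReal.ofReal (-g x) ∂Q).toReal := ENNReal.toReal_nonneg
    linarith
  have := integral_sub (integrable_const (1:ℝ)) hint
  simp only [hg] at hgle
  rw [this] at hgle
  simp at hgle
  linarith

/-- The Donsker–Varadhan inequality for an integrable exponent. -/
lemma dv_bound_s3 {α : Type*} [MeasurableSpace α] {Q P : Measure α}
    [IsProbabilityMeasure Q] [IsProbabilityMeasure P]
    (hQP : Q ≪ P) (hllr : Integrable (llr Q P) Q) {h : α → ℝ}
    (hQh : Integrable h Q) (hPh : Integrable (fun x => exp (h x)) P) :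
    ∫ x, h x ∂Q ≤ ∫ x, llr Q P x ∂Q + Real.log (∫ x, exp (h x) ∂P) := by
  haveI : IsProbabilityMeasure (P.tilted h) := isProbabilityMeasure_tilted hPh
  have hQP' : Q ≪ P.tilted h := hQP.trans (absolutelyContinuous_tilted hPh)
  have hint' : Integrable (llr Q (P.tilted h)) Q :=
    integrable_llr_tilted_right hQP hQh hllr hPh
  have h0 : 0 ≤ ∫ x, llr Q (P.tilted h) x ∂Q := gibbs_nonneg hQP' hint'
  rw [integral_llr_tilted_right hQP hQh hPh hllr] at h0
  linarith

/-- Pointwise identity: the exponential moment integrand against the Beta density is constant. -/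
lemma exp_phi_mul (N k : ℕ) (hN : 2 ≤ N) (hk1 : 1 ≤ k) (hkN : k ≤ N)
    (q : ℝ) (hq : q = ((k : ℝ) - 1) / ((N : ℝ) - 1)) {x : ℝ}
    (hx : x ∈ Set.Ioo (0:ℝ) 1) :
    Real.exp (((N:ℝ) - 1) * bernKL q x) * (x ^ (k - 1) * (1 - x) ^ (N - k))
      = q ^ (k - 1) * (1 - q) ^ (N - k) := by
  obtain ⟨hx0, hx1⟩ := hx
  have hx1' : (0:ℝ) < 1 - x := by linarith
  have hN1 : (0:ℝ) < (N:ℝ) - 1 := by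
    have : (2:ℝ) ≤ (N:ℝ) := by exact_mod_cast hN
    linarith
  have hkR : (1:ℝ) ≤ (k:ℝ) := by exact_mod_cast hk1
  have hkNR : (k:ℝ) ≤ (N:ℝ) := by exact_mod_cast hkN
  have e1 : ((N:ℝ) - 1) * q = (k:ℝ) - 1 := by
    rw [hq]; field_simp
  have e2 : ((N:ℝ) - 1) * (1 - q) = (N:ℝ) - (k:ℝ) := by
    rw [hq]; field_simp; ring
  have hsplit : ((N:ℝ) - 1) * bernKL q x
      = ((k:ℝ) - 1) * Real.log (q / x) + ((N:ℝ) - (k:ℝ)) * Real.log ((1 - q) / (1 - x)) := by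
    unfold bernKL
    rw [mul_add, ← mul_assoc, ← mul_assoc, e1, e2]
  have hcast1 : ((k:ℝ) - 1) = ((k - 1 : ℕ) : ℝ) := by
    rw [Nat.cast_sub hk1]; norm_num
  have hcast2 : ((N:ℝ) - (k:ℝ)) = ((N - k : ℕ) : ℝ) := by
    rw [Nat.cast_sub hkN]
  have part1 : Real.exp (((k:ℝ) - 1) * Real.log (q / x)) * x ^ (k - 1) = q ^ (k - 1) := by
    rcases Nat.eq_or_lt_of_le hk1 with h | h
    · simp [← h]
    · have hq0 : 0 < q := by
        rw [hq]
        apply div_pos _ hN1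
        have : (2:ℝ) ≤ (k:ℝ) := by exact_mod_cast h
        linarith
      rw [hcast1, Real.exp_nat_mul, Real.exp_log (by positivity)]
      rw [div_pow, div_mul_cancel₀]
      positivity
  have part2 : Real.exp (((N:ℝ) - (k:ℝ)) * Real.log ((1 - q) / (1 - x))) * (1 - x) ^ (N - k)
      = (1 - q) ^ (N - k) := by
    rcases Nat.eq_or_lt_of_le hkN with h | h
    · simp [h]
    · have hq1 : q < 1 := by
        rw [hq, div_lt_one hN1]
        have : (k:ℝ) < (N:ℝ) := by exact_mod_cast h
        linarith
      have h1q : 0 < 1 - q := by linarith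
      rw [hcast2, Real.exp_nat_mul, Real.exp_log (by positivity)]
      rw [div_pow, div_mul_cancel₀]
      positivity
  rw [hsplit, Real.exp_add]
  calc Real.exp (((k:ℝ) - 1) * Real.log (q / x)) *
        Real.exp (((N:ℝ) - (k:ℝ)) * Real.log ((1 - q) / (1 - x))) *
        (x ^ (k - 1) * (1 - x) ^ (N - k))
      = (Real.exp (((k:ℝ) - 1) * Real.log (q / x)) * x ^ (k - 1)) *
        (Real.exp (((N:ℝ) - (k:ℝ)) * Real.log ((1 - q) / (1 - x))) * (1 - x) ^ (N - k)) := by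
        ring
    _ = q ^ (k - 1) * (1 - q) ^ (N - k) := by rw [part1, part2]

set_option maxHeartbeats 1000000 in
/-- Abstract form of the KL-budget corollary (Corollary 1) for Beta-distributed
miscoverages: every posterior `Q` within the KL budget achieves miscoverage at most `α`. -/
theorem kl_budget_beta_miscoverage_guarantee
    {Ω Θ : Type*} [MeasurableSpace Ω] [MeasurableSpace Θ]
    (ν : Measure Ω) [IsProbabilityMeasure ν]
    (P : Measure Θ) [IsProbabilityMeasure P]
    (N k : ℕ) (hN : 2 ≤ N) (hk1 : 1 ≤ k) (hkN : k ≤ N)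
    (q : ℝ) (hq : q = ((k : ℝ) - 1) / ((N : ℝ) - 1))
    (B : ℝ)
    (hB : B = q ^ (k - 1) * (1 - q) ^ (N - k) *
      ((N.factorial : ℝ) / ((k - 1).factorial * (N - k).factorial)))
    (L : Θ → Ω → ℝ) (hL : Measurable (Function.uncurry L))
    (hL01 : ∀ θ ω, L θ ω ∈ Set.Icc (0 : ℝ) 1)
    (hBeta : ∀ θ : Θ, ν.map (L θ) = betaIntMeasure N k)
    (δ : ℝ) (hδ : δ ∈ Set.Ioo (0 : ℝ) 1)
    (α : ℝ) (hα : α ∈ Set.Ioo (0 : ℝ) 1) (hqα : q ≤ α) :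
    ENNReal.ofReal (1 - δ) ≤
      ν {ω | ∀ Q : Measure Θ, IsProbabilityMeasure Q →
        klDivE Q P ≤
            ((((N : ℝ) - 1) * bernKL q α - Real.log (B / δ) : ℝ) : EReal) →
          ∫ θ, L θ ω ∂Q ≤ α} := by
  obtain ⟨hδ0, hδ1⟩ := hδ
  obtain ⟨hα0, hα1⟩ := hα
  have hN1 : (0:ℝ) < (N:ℝ) - 1 := by
    have : (2:ℝ) ≤ (N:ℝ) := by exact_mod_cast hN
    linarith
  have hkR : (1:ℝ) ≤ (k:ℝ) := by exact_mod_cast hk1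
  have hkNR : (k:ℝ) ≤ (N:ℝ) := by exact_mod_cast hkN
  have hq0 : 0 ≤ q := by rw [hq]; exact div_nonneg (by linarith) (by linarith)
  have hq1 : q ≤ 1 := by rw [hq, div_le_one hN1]; linarith
  set C : ℝ := (N.factorial : ℝ) / ((k - 1).factorial * (N - k).factorial) with hC
  have hC0 : 0 < C := by positivity
  have hqpow : 0 < q ^ (k - 1) := by
    rcases Nat.eq_or_lt_of_le hk1 with h | h
    · simp [← h]
    · have : 0 < q := by
        rw [hq]; apply div_pos _ hN1
        have : (2:ℝ) ≤ (k:ℝ) := by exact_mod_cast h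
        linarith
      positivity
  have h1qpow : 0 < (1 - q) ^ (N - k) := by
    rcases Nat.eq_or_lt_of_le hkN with h | h
    · simp [h]
    · have : q < 1 := by
        rw [hq, div_lt_one hN1]
        have : (k:ℝ) < (N:ℝ) := by exact_mod_cast h
        linarith
      have : 0 < 1 - q := by linarith
      positivity
  have hB0 : 0 < B := by rw [hB]; exact mul_pos (mul_pos hqpow h1qpow) hC0
  have hBδ0 : 0 < B / δ := div_pos hB0 hδ0
  -- the exponential moment function
  set φ : ℝ → ℝ := fun x => Real.exp (((N:ℝ) - 1) * bernKL q x) with hφ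
  have hbm : Measurable (bernKL q) := by
    unfold bernKL
    exact ((Real.measurable_log.comp (measurable_const.div measurable_id)).const_mul q).add
      ((Real.measurable_log.comp
        (measurable_const.div (measurable_const.sub measurable_id))).const_mul (1 - q))
  have hφm : Measurable fun x => ENNReal.ofReal (φ x) :=
    ENNReal.measurable_ofReal.comp ((hbm.const_mul _).exp)
  -- the density
  set dens : ℝ → ENNReal := fun x =>
    ENNReal.ofReal (if x ∈ Set.Ioo (0:ℝ) 1 then x ^ (k-1) * (1-x) ^ (N-k) * C else 0)
    with hdens
  have hdm : Measurable dens := by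
    apply ENNReal.measurable_ofReal.comp
    exact Measurable.ite measurableSet_Ioo
      (((measurable_id.pow_const (k-1)).mul
        ((measurable_const.sub measurable_id).pow_const (N-k))).mul_const C) measurable_const
  have hbetamea : betaIntMeasure N k = volume.withDensity dens := rfl
  -- lintegral of exp moment against Beta is B
  have hbetaInt : ∫⁻ x, ENNReal.ofReal (φ x) ∂(betaIntMeasure N k) = ENNReal.ofReal B := by
    rw [hbetamea, lintegral_withDensity_eq_lintegral_mul _ hdm hφm]
    have hpt : ∀ x, (dens * fun x => ENNReal.ofReal (φ x)) x
        = (Set.Ioo (0:ℝ) 1).indicator (fun _ => ENNReal.ofReal B) x := by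
      intro x
      by_cases hx : x ∈ Set.Ioo (0:ℝ) 1
      · obtain ⟨hx0, hx1⟩ := hx
        simp only [Pi.mul_apply, hdens, if_pos (Set.mem_Ioo.mpr ⟨hx0, hx1⟩),
          Set.indicator_of_mem (Set.mem_Ioo.mpr ⟨hx0, hx1⟩)]
        rw [← ENNReal.ofReal_mul (mul_nonneg (mul_nonneg (pow_nonneg hx0.le _)
          (pow_nonneg (by linarith) _)) hC0.le)]
        congr 1
        have hkey := exp_phi_mul N k hN hk1 hkN q hq (Set.mem_Ioo.mpr ⟨hx0, hx1⟩)
        calc x ^ (k-1) * (1-x) ^ (N-k) * C * φ x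
            = (φ x * (x ^ (k-1) * (1-x) ^ (N-k))) * C := by rw [hφ]; ring
          _ = q ^ (k-1) * (1-q) ^ (N-k) * C := by rw [hkey]
          _ = B := hB.symm
      · simp only [Pi.mul_apply, hdens, if_neg hx, Set.indicator_of_notMem hx,
          ENNReal.ofReal_zero, zero_mul]
    rw [lintegral_congr hpt, lintegral_indicator measurableSet_Ioo, setLIntegral_const,
      Real.volume_Ioo]
    norm_num
  -- pushforward identity
  have hpush : ∀ θ, ∫⁻ ω, ENNReal.ofReal (φ (L θ ω)) ∂ν = ENNReal.ofReal B := by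
    intro θ
    have hLθ : Measurable (L θ) := hL.comp measurable_prodMk_left
    calc ∫⁻ ω, ENNReal.ofReal (φ (L θ ω)) ∂ν
        = ∫⁻ x, ENNReal.ofReal (φ x) ∂(ν.map (L θ)) := (lintegral_map hφm hLθ).symm
      _ = ENNReal.ofReal B := by rw [hBeta θ, hbetaInt]
  -- F and its lintegral
  set F : Ω → ENNReal := fun ω => ∫⁻ θ, ENNReal.ofReal (φ (L θ ω)) ∂P with hF
  have hFm : Measurable F :=
    Measurable.lintegral_prod_right' (hφm.comp (hL.comp measurable_swap))
  have hFint : ∫⁻ ω, F ω ∂ν = ENNReal.ofReal B := by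
    have hmeas : AEMeasurable (Function.uncurry fun (ω : Ω) (θ : Θ) =>
        ENNReal.ofReal (φ (L θ ω))) (ν.prod P) :=
      (hφm.comp (hL.comp measurable_swap)).aemeasurable
    rw [hF, lintegral_lintegral_swap hmeas]
    rw [lintegral_congr fun θ => hpush θ, lintegral_const, measure_univ, mul_one]
  -- Markov's inequality
  set bad1 : Set Ω := {ω | ENNReal.ofReal (B/δ) ≤ F ω} with hbad1def
  have hbad1 : ν bad1 ≤ ENNReal.ofReal δ := by
    have hmark := mul_meas_ge_le_lintegral₀ (μ := ν) hFm.aemeasurable (ENNReal.ofReal (B/δ))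
    rw [hFint] at hmark
    have hne0 : ENNReal.ofReal (B/δ) ≠ 0 := (ENNReal.ofReal_pos.mpr hBδ0).ne'
    have heq : ENNReal.ofReal B / ENNReal.ofReal (B/δ) = ENNReal.ofReal δ := by
      rw [← ENNReal.ofReal_div_of_pos hBδ0]
      congr 1
      field_simp
    calc ν bad1 ≤ ENNReal.ofReal B / ENNReal.ofReal (B/δ) := by
          rw [ENNReal.le_div_iff_mul_le (Or.inl hne0) (Or.inl ENNReal.ofReal_ne_top)]
          rwa [mul_comm]
      _ = ENNReal.ofReal δ := heq
  -- the a.e. (0,1) event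
  set g0 : ℝ → ENNReal := (Set.Ioo (0:ℝ) 1)ᶜ.indicator fun _ => 1 with hg0
  have hg0m : Measurable g0 := measurable_const.indicator measurableSet_Ioo.compl
  set J : Ω → ENNReal := fun ω => ∫⁻ θ, g0 (L θ ω) ∂P with hJ
  have hJm : Measurable J :=
    Measurable.lintegral_prod_right' (hg0m.comp (hL.comp measurable_swap))
  have hJ0 : ∫⁻ ω, J ω ∂ν = 0 := by
    have hmeas : AEMeasurable (Function.uncurry fun (ω : Ω) (θ : Θ) =>
        g0 (L θ ω)) (ν.prod P) :=
      (hg0m.comp (hL.comp measurable_swap)).aemeasurable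
    rw [hJ, lintegral_lintegral_swap hmeas]
    have inner : ∀ θ, ∫⁻ ω, g0 (L θ ω) ∂ν = 0 := by
      intro θ
      have hLθ : Measurable (L θ) := hL.comp measurable_prodMk_left
      rw [← lintegral_map hg0m hLθ, hBeta θ, hbetamea,
        lintegral_withDensity_eq_lintegral_mul _ hdm hg0m]
      have hpt : ∀ x, (dens * g0) x = 0 := by
        intro x
        by_cases hx : x ∈ Set.Ioo (0:ℝ) 1
        · simp only [Pi.mul_apply, hg0, Set.indicator_of_notMem (by simpa using hx :
            x ∉ (Set.Ioo (0:ℝ) 1)ᶜ), mul_zero]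
        · simp only [Pi.mul_apply, hdens, if_neg hx, ENNReal.ofReal_zero, zero_mul]
      rw [lintegral_congr hpt, lintegral_zero]
    rw [lintegral_congr fun θ => inner θ, lintegral_zero]
  have hJae : ν {ω | J ω ≠ 0} = 0 := by
    have := (lintegral_eq_zero_iff hJm).mp hJ0
    rw [Filter.EventuallyEq] at this
    simpa [ae_iff] using this
  -- the good set
  set G : Set Ω := (bad1 ∪ {ω | J ω ≠ 0})ᶜ with hG
  have hGm : MeasurableSet (bad1 ∪ {ω | J ω ≠ 0}) := by
    refine MeasurableSet.union ?_ ?_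
    · exact hFm measurableSet_Ici
    · exact (hJm (measurableSet_singleton 0)).compl
  have hGν : ENNReal.ofReal (1 - δ) ≤ ν G := by
    have hub : ν (bad1 ∪ {ω | J ω ≠ 0}) ≤ ENNReal.ofReal δ := by
      refine le_trans (measure_union_le _ _) ?_
      rw [hJae, add_zero]
      exact hbad1
    rw [hG, measure_compl hGm (measure_ne_top ν _), measure_univ]
    calc ENNReal.ofReal (1 - δ) = 1 - ENNReal.ofReal δ := by
          rw [← ENNReal.ofReal_one, ← ENNReal.ofReal_sub _ hδ0.le]
      _ ≤ 1 - ν (bad1 ∪ {ω | J ω ≠ 0}) := tsub_le_tsub_left hub 1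
  refine le_trans hGν (measure_mono ?_)
  -- the pointwise argument on the good set
  intro ω hω
  simp only [hG, Set.mem_compl_iff, Set.mem_union, Set.mem_setOf_eq, not_or, not_le,
    ne_eq, not_not, hbad1def] at hω
  obtain ⟨hωF, hωJ⟩ := hω
  -- section measurability and integrability
  have hLωm : Measurable fun θ => L θ ω := hL.comp (measurable_id.prodMk measurable_const)
  have hPae : ∀ᵐ θ ∂P, L θ ω ∈ Set.Ioo (0:ℝ) 1 := by
    have h0 : ∫⁻ θ, g0 (L θ ω) ∂P = 0 := hωJ
    have := (lintegral_eq_zero_iff (hg0m.comp hLωm)).mp h0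
    filter_upwards [this] with θ hθ
    by_contra hmem
    rw [Function.comp_apply, hg0, Set.indicator_of_mem (by simpa using hmem)] at hθ
    simp at hθ
  intro Q hQprob hQbudget
  haveI := hQprob
  by_cases hc : Q ≪ P ∧ Integrable (llr Q P) Q
  swap
  · rw [klDivE, if_neg hc] at hQbudget
    exact absurd (top_le_iff.mp hQbudget) (EReal.coe_ne_top _)
  obtain ⟨hQP, hllrint⟩ := hc
  have hKL : ∫ θ, llr Q P θ ∂Q ≤ ((N:ℝ) - 1) * bernKL q α - Real.log (B / δ) := by
    rw [klDivE, if_pos ⟨hQP, hllrint⟩] at hQbudget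
    exact_mod_cast hQbudget
  have hLint : Integrable (fun θ => L θ ω) Q := by
    refine Integrable.mono' (integrable_const (1:ℝ)) hLωm.aestronglyMeasurable ?_
    refine Filter.Eventually.of_forall fun θ => ?_
    rw [Real.norm_eq_abs]
    exact abs_le.mpr ⟨by linarith [(hL01 θ ω).1], (hL01 θ ω).2⟩
  have hm1 : ∫ θ, L θ ω ∂Q ≤ 1 := by
    calc ∫ θ, L θ ω ∂Q ≤ ∫ _, (1:ℝ) ∂Q :=
          integral_mono hLint (integrable_const 1) fun θ => (hL01 θ ω).2
      _ = 1 := by simp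
  suffices hβ : ∀ β, α < β → β < 1 → (∫ θ, L θ ω ∂Q) ≤ β by
    by_contra hcon
    push_neg at hcon
    have h1 := hβ ((α + ∫ θ, L θ ω ∂Q)/2) (by linarith) (by linarith)
    linarith
  intro β hαβ hβ1
  have hβ0 : 0 < β := lt_trans hα0 hαβ
  have hqβ : q < β := lt_of_le_of_lt hqα hαβ
  set c : ℝ := (β - q) / (β * (1 - β)) with hcdef
  have hc0 : 0 < c := div_pos (by linarith) (by nlinarith)
  set D : ℝ := ((N:ℝ) - 1) * c with hDdef
  have hD0 : 0 < D := mul_pos hN1 hc0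
  set A : ℝ := ((N:ℝ) - 1) * (bernKL q β - c * β) with hAdef
  set h : Θ → ℝ := fun θ => A + D * L θ ω with hhdef
  have hAD : ∀ y : ℝ, A + D * y = ((N:ℝ) - 1) * (bernKL q β + c * (y - β)) := by
    intro y
    rw [hAdef, hDdef]
    ring
  have hhm : Measurable h := measurable_const.add (hLωm.const_mul D)
  have hQh : Integrable h Q := (integrable_const A).add (hLint.const_mul D)
  have hPh : Integrable (fun θ => Real.exp (h θ)) P := by
    refine Integrable.mono' (integrable_const (Real.exp (A + D)))
      (hhm.exp.aestronglyMeasurable) ?_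
    refine Filter.Eventually.of_forall fun θ => ?_
    rw [Real.norm_eq_abs, abs_of_pos (Real.exp_pos _)]
    refine Real.exp_le_exp.mpr ?_
    rw [hhdef]
    simp only
    nlinarith [(hL01 θ ω).1, (hL01 θ ω).2, hD0]
  -- compare exp h with φ ∘ L under P
  have hexpint : ∫ θ, Real.exp (h θ) ∂P ≤ B / δ := by
    have hofReal : ENNReal.ofReal (∫ θ, Real.exp (h θ) ∂P)
        = ∫⁻ θ, ENNReal.ofReal (Real.exp (h θ)) ∂P :=
      ofReal_integral_eq_lintegral_ofReal hPh
        (Filter.Eventually.of_forall fun θ => (Real.exp_pos _).le)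
    have hle : ∫⁻ θ, ENNReal.ofReal (Real.exp (h θ)) ∂P ≤ F ω := by
      refine lintegral_mono_ae ?_
      filter_upwards [hPae] with θ hθ
      refine ENNReal.ofReal_le_ofReal ?_
      rw [hφ]
      refine Real.exp_le_exp.mpr ?_
      have htan := bernKL_tangent_s3 hq0 hq1 (Set.mem_Ioo.mpr ⟨hβ0, hβ1⟩) hθ
      have : h θ = ((N:ℝ) - 1) * (bernKL q β + c * (L θ ω - β)) := hAD (L θ ω)
      rw [this]
      exact mul_le_mul_of_nonneg_left (by rw [hcdef]; linarith) hN1.le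
    have : ENNReal.ofReal (∫ θ, Real.exp (h θ) ∂P) ≤ ENNReal.ofReal (B/δ) := by
      rw [hofReal]
      exact le_trans hle hωF.le
    exact (ENNReal.ofReal_le_ofReal_iff hBδ0.le).mp this
  have hlogle : Real.log (∫ θ, Real.exp (h θ) ∂P) ≤ Real.log (B/δ) :=
    Real.log_le_log (integral_exp_pos hPh) hexpint
  have hdv := dv_bound_s3 hQP hllrint hQh hPh
  have hinth : ∫ θ, h θ ∂Q = A + D * ∫ θ, L θ ω ∂Q := by
    rw [hhdef]
    rw [integral_add (integrable_const A) (hLint.const_mul D), integral_const,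
      integral_const_mul, probReal_univ]
    simp
  -- monotonicity of bernKL q on [α, β]
  have hmono : ((N:ℝ) - 1) * bernKL q α ≤ ((N:ℝ) - 1) * bernKL q β := by
    have htan := bernKL_tangent_s3 hq0 hq1 (Set.mem_Ioo.mpr ⟨hα0, hα1⟩)
      (Set.mem_Ioo.mpr ⟨hβ0, hβ1⟩)
    have hnn : 0 ≤ (α - q) / (α * (1 - α)) * (β - α) := by
      apply mul_nonneg
      · exact div_nonneg (by linarith) (by nlinarith)
      · linarith
    exact mul_le_mul_of_nonneg_left (by linarith) hN1.le
  have hchain : A + D * ∫ θ, L θ ω ∂Q ≤ A + D * β := by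
    have h1 : A + D * ∫ θ, L θ ω ∂Q ≤ ((N:ℝ) - 1) * bernKL q α := by
      rw [← hinth]
      calc ∫ θ, h θ ∂Q ≤ ∫ θ, llr Q P θ ∂Q + Real.log (∫ θ, Real.exp (h θ) ∂P) := hdv
        _ ≤ (((N:ℝ) - 1) * bernKL q α - Real.log (B/δ)) + Real.log (B/δ) := by
            linarith
        _ = ((N:ℝ) - 1) * bernKL q α := by ring
    have h2 : ((N:ℝ) - 1) * bernKL q β = A + D * β := by
      rw [hAD β]
      ring
    linarith
  have := (mul_le_mul_iff_right₀ hD0).mp (by linarith : D * ∫ θ, L θ ω ∂Q ≤ D * β)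
  exact this
end

section
/- Let N ≥ 2 and 1 ≤ k ≤ N be integers and set a := (k−1)/(N−1). If b is a random variable with the Beta distribution with parameters (k, N+1−k), i.e. with density x^{k−1}(1−x)^{N−k} · N!/((k−1)!(N−k)!) on (0,1), then E[ (a/b)^{k−1} · ((1−a)/(1−b))^{N−k} ] = a^{k−1} (1−a)^{N−k} · N! / ((k−1)! (N−k)!); equivalently, E[ exp( (N−1) · kl(a ‖ b) ) ] equals the Beta(k, N+1−k) density evaluated at the point a. -/
open scoped ENNReal NNReal


open MeasureTheory Real

/-- The key moment identity for the Beta distribution (equation (14) in the proof of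
Theorem 1): if `b ~ Beta(k, N+1-k)` and `a = (k-1)/(N-1)`, then
`E[(a/b)^(k-1) ((1-a)/(1-b))^(N-k)]` equals the `Beta(k, N+1-k)` density evaluated at `a`;
equivalently, `E[exp((N-1)·kl(a‖b))]` equals the same value. -/
theorem beta_exponential_moment_of_bernKL
    {Ω : Type*} [MeasurableSpace Ω] (ν : Measure Ω) [IsProbabilityMeasure ν]
    (N k : ℕ) (hN : 2 ≤ N) (hk1 : 1 ≤ k) (hkN : k ≤ N)
    (a : ℝ) (ha : a = ((k : ℝ) - 1) / ((N : ℝ) - 1))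
    (b : Ω → ℝ) (hb : Measurable b) (hlaw : ν.map b = betaIntMeasure N k) :
    (∫ ω, (a / b ω) ^ (k - 1) * ((1 - a) / (1 - b ω)) ^ (N - k) ∂ν =
        a ^ (k - 1) * (1 - a) ^ (N - k) *
          ((N.factorial : ℝ) / ((k - 1).factorial * (N - k).factorial))) ∧
    (∫ ω, Real.exp (((N : ℝ) - 1) * bernKL a (b ω)) ∂ν =
        a ^ (k - 1) * (1 - a) ^ (N - k) *
          ((N.factorial : ℝ) / ((k - 1).factorial * (N - k).factorial))) := by
  have hNk : 1 ≤ N := le_trans (by norm_num) hN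
  set C : ℝ := (N.factorial : ℝ) / ((k - 1).factorial * (N - k).factorial) with hCdef
  have hC0 : 0 ≤ C := by positivity
  have hN1 : (0:ℝ) < (N:ℝ) - 1 := by
    have : (2:ℝ) ≤ (N:ℝ) := by exact_mod_cast hN
    linarith
  have hN1ne : ((N:ℝ) - 1) ≠ 0 := ne_of_gt hN1
  have hk1' : (1:ℝ) ≤ (k:ℝ) := by exact_mod_cast hk1
  have ha0 : 0 ≤ a := by
    rw [ha]; apply div_nonneg; linarith; linarith
  set f : ℝ → ℝ := fun x => (a / x) ^ (k - 1) * ((1 - a) / (1 - x)) ^ (N - k) with hfdef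
  have hfm : Measurable f := by
    apply Measurable.mul
    · exact (measurable_const.div measurable_id).pow_const _
    · exact (measurable_const.div (measurable_const.sub measurable_id)).pow_const _
  have hIoo : MeasurableSet (Set.Ioo (0:ℝ) 1) := measurableSet_Ioo
  -- the target constant
  set c : ℝ := a ^ (k - 1) * (1 - a) ^ (N - k) * C with hcdef
  -- first integral
  have key1 : ∫ ω, f (b ω) ∂ν = c := by
    rw [← integral_map hb.aemeasurable hfm.aestronglyMeasurable, hlaw]
    have hgm : Measurable fun x : ℝ =>
        (if x ∈ Set.Ioo (0:ℝ) 1 then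
          x ^ (k - 1) * (1 - x) ^ (N - k) * C else 0).toNNReal := by
      apply Measurable.real_toNNReal
      apply Measurable.ite hIoo _ measurable_const
      exact ((measurable_id.pow_const _).mul
        ((measurable_const.sub measurable_id).pow_const _)).mul_const _
    have heq : betaIntMeasure N k = volume.withDensity fun x =>
        ((if x ∈ Set.Ioo (0:ℝ) 1 then
          x ^ (k - 1) * (1 - x) ^ (N - k) * C else 0).toNNReal : ℝ≥0∞) := rfl
    rw [heq, integral_withDensity_eq_integral_smul hgm f]
    have hind : (fun x : ℝ =>
        (if x ∈ Set.Ioo (0:ℝ) 1 then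
          x ^ (k - 1) * (1 - x) ^ (N - k) * C else 0).toNNReal • f x)
        = Set.indicator (Set.Ioo (0:ℝ) 1) (fun _ => c) := by
      funext x
      by_cases hx : x ∈ Set.Ioo (0:ℝ) 1
      · have hx0 : (0:ℝ) < x := hx.1
        have hx1 : x < 1 := hx.2
        have h1x : (0:ℝ) < 1 - x := by linarith
        rw [Set.indicator_of_mem hx, if_pos hx, NNReal.smul_def,
          Real.coe_toNNReal _ (by positivity)]
        simp only [hfdef, hcdef]
        rw [div_pow, div_pow]
        have h1 : x ^ (k - 1) ≠ 0 := pow_ne_zero _ (ne_of_gt hx0)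
        have h2 : (1 - x) ^ (N - k) ≠ 0 := pow_ne_zero _ (ne_of_gt h1x)
        field_simp
        have e1 : x ^ (k - 1) * x⁻¹ ^ (k - 1) = 1 := by rw [← mul_pow, mul_inv_cancel₀ hx0.ne', one_pow]
        have e2 : (1 - x)⁻¹ ^ (N - k) * (1 - x) ^ (N - k) = 1 := by rw [← mul_pow, inv_mul_cancel₀ h1x.ne', one_pow]
        linear_combination (a ^ (k - 1) * C * (1 - a) ^ (N - k) * ((1 - x)⁻¹ ^ (N - k) * (1 - x) ^ (N - k))) * e1 + (a ^ (k - 1) * C * (1 - a) ^ (N - k)) * e2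
      · rw [Set.indicator_of_notMem hx, if_neg hx]
        simp
    rw [hind, integral_indicator hIoo, setIntegral_const, Real.volume_real_Ioo]
    norm_num
  have hfirst : ∫ ω, (a / b ω) ^ (k - 1) * ((1 - a) / (1 - b ω)) ^ (N - k) ∂ν = c := key1
  constructor
  · exact hfirst
  · -- a.e. b ω ∈ Ioo 0 1
    have h0 : betaIntMeasure N k (Set.Ioo (0:ℝ) 1)ᶜ = 0 := by
      rw [betaIntMeasure, withDensity_apply _ hIoo.compl]
      have hz : ∀ x ∈ (Set.Ioo (0:ℝ) 1)ᶜ,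
          ENNReal.ofReal (if x ∈ Set.Ioo (0:ℝ) 1 then
            x ^ (k - 1) * (1 - x) ^ (N - k) * C else 0) = (fun _ : ℝ => (0:ENNReal)) x := by
        intro x hx
        rw [if_neg hx, ENNReal.ofReal_zero]
      rw [setLIntegral_congr_fun hIoo.compl hz]
      simp
    have hae : ∀ᵐ ω ∂ν, b ω ∈ Set.Ioo (0:ℝ) 1 := by
      rw [ae_iff]
      have : {ω | ¬ b ω ∈ Set.Ioo (0:ℝ) 1} = b ⁻¹' (Set.Ioo (0:ℝ) 1)ᶜ := rfl
      rw [this, ← Measure.map_apply hb hIoo.compl, hlaw]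
      exact h0
    have hpt : ∀ x ∈ Set.Ioo (0:ℝ) 1,
        Real.exp (((N:ℝ) - 1) * bernKL a x) = f x := by
      intro x hx
      obtain ⟨hx0, hx1⟩ := hx
      have h1x : (0:ℝ) < 1 - x := by linarith
      have h1 : ((N:ℝ) - 1) * a = (k:ℝ) - 1 := by
        rw [ha, mul_comm, div_mul_cancel₀ _ hN1ne]
      have h2 : ((N:ℝ) - 1) * (1 - a) = (N:ℝ) - (k:ℝ) := by
        rw [ha]; field_simp; ring
      rw [bernKL, mul_add, ← mul_assoc, ← mul_assoc, h1, h2, Real.exp_add]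
      simp only [hfdef]
      congr 1
      · rcases eq_or_lt_of_le hk1 with hk | hk
        · rw [← hk]; simp
        · have hapos : 0 < a := by
            rw [ha]; apply div_pos _ hN1
            have : (2:ℝ) ≤ (k:ℝ) := by exact_mod_cast hk
            linarith
          have ht : 0 < a / x := div_pos hapos hx0
          have hcast : ((k:ℝ) - 1) = ((k - 1 : ℕ) : ℝ) := by
            rw [Nat.cast_sub hk1]; norm_num
          rw [hcast, Real.exp_nat_mul, Real.exp_log ht]
      · rcases eq_or_lt_of_le hkN with hk | hk
        · rw [hk]; simp
        · have ha1 : a < 1 := by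
            rw [ha, div_lt_one hN1]
            have : (k:ℝ) < (N:ℝ) := by exact_mod_cast hk
            linarith
          have ht : 0 < (1 - a) / (1 - x) := div_pos (by linarith) h1x
          have hcast : ((N:ℝ) - (k:ℝ)) = ((N - k : ℕ) : ℝ) := by
            rw [Nat.cast_sub hkN]
          rw [hcast, Real.exp_nat_mul, Real.exp_log ht]
    have : ∫ ω, Real.exp (((N:ℝ) - 1) * bernKL a (b ω)) ∂ν = ∫ ω, f (b ω) ∂ν := by
      apply integral_congr_ae
      filter_upwards [hae] with ω hω
      exact hpt _ hω
    rw [this, key1]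
end

section
/- Let N and k be integers with 1 < k < N, and set a := (k−1)/(N−1). Then a^{k−1} (1−a)^{N−k} · N! / ((k−1)! (N−k)!) < N · √(N−1) / √( 2π (k−1)(N−k) ). -/
open Real

open Stirling in
private lemma sqrtPi_le_stirling (n : ℕ) : Real.sqrt π ≤ stirlingSeq (n + 1) :=
  stirlingSeq'_antitone.le_of_tendsto
    (tendsto_stirlingSeq_sqrt_pi.comp (Filter.tendsto_add_atTop_nat 1)) n

open Stirling in
private lemma stirling_strict (n : ℕ) : stirlingSeq (n + 2) < stirlingSeq (n + 1) := by
  have h := log_stirlingSeq_diff_hasSum n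
  have hpos : 0 < Real.log (stirlingSeq (n + 1)) - Real.log (stirlingSeq (n + 2)) := by
    refine hasSum_lt (f := fun _ : ℕ => (0 : ℝ)) (i := 0) (fun k => by positivity) ?_ hasSum_zero h
    positivity
  exact (Real.log_lt_log_iff (stirlingSeq'_pos _) (stirlingSeq'_pos _)).mp (by linarith)

open Stirling in
private lemma sqrtPi_lt_stirling (n : ℕ) : Real.sqrt π < stirlingSeq (n + 1) :=
  lt_of_le_of_lt (sqrtPi_le_stirling (n + 1)) (stirling_strict n)

open Stirling in
private lemma factorial_eq_stirling (n : ℕ) (hn : 1 ≤ n) :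
    (n.factorial : ℝ) = stirlingSeq n * (Real.sqrt (2 * n) * ((n : ℝ) / Real.exp 1) ^ n) := by
  have hpos : (0 : ℝ) < Real.sqrt (2 * n) * ((n : ℝ) / Real.exp 1) ^ n := by
    have : (0:ℝ) < (n:ℝ) := by exact_mod_cast hn
    positivity
  rw [stirlingSeq, div_mul_cancel₀ _ (ne_of_gt hpos)]

open Stirling in
private lemma keyA (m n : ℕ) (hm : 1 ≤ m) (hn : 1 ≤ n) :
    ((m + n).factorial : ℝ) / ((m.factorial : ℝ) * (n.factorial : ℝ)) <
      Real.sqrt (((m + n : ℕ) : ℝ) / (2 * π * m * n)) *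
        (((m + n : ℕ) : ℝ) ^ (m + n) / ((m : ℝ) ^ m * (n : ℝ) ^ n)) := by
  have hmR : (0:ℝ) < (m:ℝ) := by exact_mod_cast hm
  have hnR : (0:ℝ) < (n:ℝ) := by exact_mod_cast hn
  have hsR : (0:ℝ) < ((m+n:ℕ):ℝ) := by positivity
  have hSm : 0 < stirlingSeq m := by
    obtain ⟨m, rfl⟩ := Nat.exists_eq_add_of_le' hm; simpa using stirlingSeq'_pos m
  have hSn : 0 < stirlingSeq n := by
    obtain ⟨n, rfl⟩ := Nat.exists_eq_add_of_le' hn; simpa using stirlingSeq'_pos n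
  have hSsLe : stirlingSeq (m + n) ≤ stirlingSeq m := by
    obtain ⟨m', rfl⟩ := Nat.exists_eq_add_of_le' hm
    have h : m' + 1 + n = (m' + n) + 1 := by ring
    rw [h]
    exact stirlingSeq'_antitone (Nat.le_add_right m' n)
  have hSnPi : Real.sqrt π < stirlingSeq n := by
    obtain ⟨n, rfl⟩ := Nat.exists_eq_add_of_le' hn; simpa using sqrtPi_lt_stirling n
  have hPi : (0:ℝ) < Real.sqrt π := Real.sqrt_pos.mpr pi_pos
  -- notation
  set e := Real.exp 1 with he
  have heP : (0:ℝ) < e := Real.exp_pos 1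
  have hBm : (0:ℝ) < Real.sqrt (2 * m) * ((m:ℝ)/e) ^ m := by positivity
  have hBn : (0:ℝ) < Real.sqrt (2 * n) * ((n:ℝ)/e) ^ n := by positivity
  have hBs : (0:ℝ) < Real.sqrt (2 * ((m+n:ℕ):ℝ)) * (((m+n:ℕ):ℝ)/e) ^ (m+n) := by positivity
  rw [factorial_eq_stirling m hm, factorial_eq_stirling n hn,
    factorial_eq_stirling (m+n) (by omega)]
  -- identity I : RHS = (1/√π) * Bs/(Bm*Bn)
  have hsqrtI : Real.sqrt (((m + n : ℕ) : ℝ) / (2 * π * m * n)) =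
      Real.sqrt (2 * ((m+n:ℕ):ℝ)) / (Real.sqrt π * Real.sqrt (2*m) * Real.sqrt (2*n)) := by
    rw [← Real.sqrt_mul (by positivity), ← Real.sqrt_mul (by positivity),
      ← Real.sqrt_div (by positivity)]
    congr 1
    push_cast
    field_simp
  have hepow : e ^ (m + n) = e ^ m * e ^ n := pow_add e m n
  have hI : Real.sqrt (((m + n : ℕ) : ℝ) / (2 * π * m * n)) *
        (((m + n : ℕ) : ℝ) ^ (m + n) / ((m : ℝ) ^ m * (n : ℝ) ^ n)) =
      (1 / Real.sqrt π) *
        ((Real.sqrt (2 * ((m+n:ℕ):ℝ)) * (((m+n:ℕ):ℝ)/e) ^ (m+n)) /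
          ((Real.sqrt (2 * m) * ((m:ℝ)/e) ^ m) * (Real.sqrt (2 * n) * ((n:ℝ)/e) ^ n))) := by
    rw [hsqrtI, div_pow, div_pow, div_pow, hepow]
    have h1 : (0:ℝ) < Real.sqrt (2*(m:ℝ)) := by positivity
    have h2 : (0:ℝ) < Real.sqrt (2*(n:ℝ)) := by positivity
    field_simp
  rw [hI]
  have hratio : stirlingSeq (m+n) / (stirlingSeq m * stirlingSeq n) < 1 / Real.sqrt π := by
    rw [div_lt_div_iff₀ (by positivity) hPi, one_mul]
    calc stirlingSeq (m+n) * Real.sqrt π ≤ stirlingSeq m * Real.sqrt π := by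
          exact mul_le_mul_of_nonneg_right hSsLe hPi.le
      _ < stirlingSeq m * stirlingSeq n := by
          exact mul_lt_mul_of_pos_left hSnPi hSm
  calc stirlingSeq (m+n) * (Real.sqrt (2 * ((m+n:ℕ):ℝ)) * (((m+n:ℕ):ℝ)/e) ^ (m+n)) /
        (stirlingSeq m * (Real.sqrt (2 * m) * ((m:ℝ)/e) ^ m) *
          (stirlingSeq n * (Real.sqrt (2 * n) * ((n:ℝ)/e) ^ n))) =
      (stirlingSeq (m+n) / (stirlingSeq m * stirlingSeq n)) *
        ((Real.sqrt (2 * ((m+n:ℕ):ℝ)) * (((m+n:ℕ):ℝ)/e) ^ (m+n)) /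
          ((Real.sqrt (2 * m) * ((m:ℝ)/e) ^ m) * (Real.sqrt (2 * n) * ((n:ℝ)/e) ^ n))) := by
        field_simp
    _ < (1 / Real.sqrt π) *
        ((Real.sqrt (2 * ((m+n:ℕ):ℝ)) * (((m+n:ℕ):ℝ)/e) ^ (m+n)) /
          ((Real.sqrt (2 * m) * ((m:ℝ)/e) ^ m) * (Real.sqrt (2 * n) * ((n:ℝ)/e) ^ n))) := by
        exact mul_lt_mul_of_pos_right hratio (by positivity)

/-- The Stirling-type upper bound on the constant `B(N)`: the `Beta(k, N+1-k)` density
evaluated at `a = (k-1)/(N-1)` is less than `N √(N-1) / √(2π (k-1)(N-k))`. -/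
theorem betaDensity_lt_stirling_bound
    (N k : ℕ) (hk : 1 < k) (hkN : k < N)
    (a : ℝ) (ha : a = ((k : ℝ) - 1) / ((N : ℝ) - 1)) :
    a ^ (k - 1) * (1 - a) ^ (N - k) *
        ((N.factorial : ℝ) / ((k - 1).factorial * (N - k).factorial)) <
      (N : ℝ) * Real.sqrt ((N : ℝ) - 1) /
        Real.sqrt (2 * Real.pi * ((k : ℝ) - 1) * ((N : ℝ) - (k : ℝ))) := by
  obtain ⟨m, n, hm, hn, rfl, rfl⟩ :
      ∃ m n, 1 ≤ m ∧ 1 ≤ n ∧ k = m + 1 ∧ N = m + n + 1 :=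
    ⟨k - 1, N - k, by omega, by omega, by omega, by omega⟩
  have hmR : (0:ℝ) < (m:ℝ) := by exact_mod_cast hm
  have hnR : (0:ℝ) < (n:ℝ) := by exact_mod_cast hn
  have hsR : (0:ℝ) < (m:ℝ) + n := by positivity
  subst ha
  have hc1 : ((m + 1 : ℕ) : ℝ) - 1 = (m : ℝ) := by push_cast; ring
  have hc2 : ((m + n + 1 : ℕ) : ℝ) - ((m + 1 : ℕ) : ℝ) = (n : ℝ) := by push_cast; ring
  have hc3 : ((m + n + 1 : ℕ) : ℝ) - 1 = ((m + n : ℕ) : ℝ) := by push_cast; ring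
  simp only [Nat.add_sub_cancel, show m + n + 1 - (m + 1) = n from by omega]
  rw [hc1, hc2, hc3]
  have h1a : 1 - (m : ℝ) / ((m + n : ℕ) : ℝ) = (n : ℝ) / ((m + n : ℕ) : ℝ) := by
    push_cast
    field_simp
    ring
  rw [h1a]
  have hfac : ((m + n + 1).factorial : ℝ) = ((m + n + 1 : ℕ) : ℝ) * ((m + n).factorial : ℝ) := by
    rw [Nat.factorial_succ]; push_cast; ring
  have key := keyA m n hm hn
  have hNpos : (0:ℝ) < ((m + n + 1 : ℕ) : ℝ) := by positivity
  have hsN : (0:ℝ) < ((m + n : ℕ) : ℝ) := by push_cast; positivity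
  have hcoef : (0:ℝ) < ((m + n + 1 : ℕ) : ℝ) *
      ((m:ℝ)^m * (n:ℝ)^n / ((m + n : ℕ) : ℝ) ^ (m + n)) := by positivity
  have hLHS : ((m:ℝ)/((m+n:ℕ):ℝ)) ^ m * ((n:ℝ)/((m+n:ℕ):ℝ)) ^ n *
        (((m + n + 1).factorial : ℝ) / ((m.factorial : ℝ) * (n.factorial : ℝ))) =
      (((m + n + 1 : ℕ) : ℝ) * ((m:ℝ)^m * (n:ℝ)^n / ((m + n : ℕ) : ℝ) ^ (m + n))) *
        (((m + n).factorial : ℝ) / ((m.factorial : ℝ) * (n.factorial : ℝ))) := by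
    rw [hfac, div_pow, div_pow, pow_add]
    have hf1 : (0:ℝ) < (m.factorial : ℝ) := by exact_mod_cast m.factorial_pos
    have hf2 : (0:ℝ) < (n.factorial : ℝ) := by exact_mod_cast n.factorial_pos
    field_simp
  rw [hLHS]
  calc (((m + n + 1 : ℕ) : ℝ) * ((m:ℝ)^m * (n:ℝ)^n / ((m + n : ℕ) : ℝ) ^ (m + n))) *
        (((m + n).factorial : ℝ) / ((m.factorial : ℝ) * (n.factorial : ℝ)))
      < (((m + n + 1 : ℕ) : ℝ) * ((m:ℝ)^m * (n:ℝ)^n / ((m + n : ℕ) : ℝ) ^ (m + n))) *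
        (Real.sqrt (((m + n : ℕ) : ℝ) / (2 * π * m * n)) *
          (((m + n : ℕ) : ℝ) ^ (m + n) / ((m : ℝ) ^ m * (n : ℝ) ^ n))) :=
        mul_lt_mul_of_pos_left key hcoef
    _ = ((m + n + 1 : ℕ) : ℝ) * Real.sqrt (((m + n : ℕ) : ℝ)) /
          Real.sqrt (2 * π * (m:ℝ) * (n:ℝ)) := by
        rw [Real.sqrt_div hsN.le]
        field_simp
end

section
/- Let (Z, 𝒵) be a measurable space with probability measure μ, Θ a measurable parameter space, β > 0, and g : Z × [0, β] × Θ → [0, 1] jointly measurable with τ ↦ g(z, τ, θ) continuous for every z and θ. For an integer N ≥ 2 and D = (z₁,…,z_N) ∈ Z^N, define R̂(θ, D) := sup_{τ ∈ [0,β]} | (1/N) Σ_{i=1}^N g(z_i, τ, θ) − ∫_Z g(z, τ, θ) dμ(z) | and R(θ) := E_{D ∼ μ^N}[R̂(θ, D)], where the coordinates of D are i.i.d. with law μ. Then for every θ ∈ Θ, E_{D ∼ μ^N}[ exp( 2(N−1) · (R̂(θ, D) − R(θ))² ) ] ≤ 2N. -/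
open MeasureTheory Real


-- key analytic inequality for Hoeffding's lemma
lemma hoeffding_fun_bound {p : ℝ} (hp0 : 0 ≤ p) (hp1 : p ≤ 1) (h : ℝ) :
    (1 - p) * exp (-p * h) + p * exp ((1 - p) * h) ≤ exp (h ^ 2 / 8) := by
  have hD : ∀ x : ℝ, 0 < 1 - p + p * exp x := by
    intro x
    rcases lt_or_eq_of_le hp1 with h1 | h1
    · nlinarith [exp_pos x, mul_nonneg hp0 (exp_pos x).le]
    · simp [← h1]; positivity
  -- φ x = x^2/8 + p x - log (1 - p + p exp x)
  set φ : ℝ → ℝ := fun x => x ^ 2 / 8 + p * x - Real.log (1 - p + p * exp x) with hφ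
  set φ' : ℝ → ℝ := fun x => x / 4 + p - p * exp x / (1 - p + p * exp x) with hφ'
  have hd : ∀ x, HasDerivAt φ (φ' x) x := by
    intro x
    have h1 : HasDerivAt (fun x : ℝ => 1 - p + p * exp x) (p * exp x) x := by
      simpa using ((Real.hasDerivAt_exp x).const_mul p).const_add (1 - p)
    have h2 := (h1.log (hD x).ne')
    have h3 : HasDerivAt (fun x : ℝ => x ^ 2 / 8 + p * x) (x / 4 + p) x := by
      have := ((hasDerivAt_pow 2 x).div_const 8).add ((hasDerivAt_id x).const_mul p)
      exact this.congr_deriv (by norm_num; ring)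
    exact h3.sub h2
  have hd' : ∀ x, HasDerivAt φ' (1 / 4 - p * (1 - p) * exp x / (1 - p + p * exp x) ^ 2) x := by
    intro x
    have h1 : HasDerivAt (fun x : ℝ => 1 - p + p * exp x) (p * exp x) x := by
      simpa using ((Real.hasDerivAt_exp x).const_mul p).const_add (1 - p)
    have h2 : HasDerivAt (fun x : ℝ => p * exp x) (p * exp x) x :=
      (Real.hasDerivAt_exp x).const_mul p
    have h3 := h2.div h1 (hD x).ne'
    have h4 : HasDerivAt (fun x : ℝ => x / 4 + p) (1 / 4) x := by
      simpa using (hasDerivAt_id x).div_const 4 |>.add_const p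
    refine (h4.sub h3).congr_deriv ?_
    field_simp
    ring
  have hsec : ∀ x : ℝ, 0 ≤ 1 / 4 - p * (1 - p) * exp x / (1 - p + p * exp x) ^ 2 := by
    intro x
    rw [sub_nonneg, div_le_iff₀ (pow_pos (hD x) 2)]
    nlinarith [exp_pos x, sq_nonneg (1 - p - p * exp x)]
  have hmono : Monotone φ' := by
    apply monotone_of_deriv_nonneg
    · exact fun x => (hd' x).differentiableAt
    · intro x; rw [(hd' x).deriv]; exact hsec x
  have hφ'0 : φ' 0 = 0 := by simp [hφ']
  have hφ0 : φ 0 = 0 := by simp [hφ]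
  have hcont : Continuous φ := by
    have : ∀ x, DifferentiableAt ℝ φ x := fun x => (hd x).differentiableAt
    exact (Differentiable.continuous this)
  have key : ∀ x : ℝ, 0 ≤ φ x := by
    intro x
    rcases le_total 0 x with hx | hx
    · have hm : MonotoneOn φ (Set.Ici 0) := by
        apply monotoneOn_of_deriv_nonneg (convex_Ici 0) hcont.continuousOn
        · exact fun y _ => (hd y).differentiableAt.differentiableWithinAt
        · intro y hy
          rw [(hd y).deriv]
          have : (0:ℝ) ≤ y := le_of_lt (by simpa using hy)
          calc (0:ℝ) = φ' 0 := hφ'0.symm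
            _ ≤ φ' y := hmono this
      calc (0:ℝ) = φ 0 := hφ0.symm
        _ ≤ φ x := hm (by simp) (by simpa using hx) hx
    · have hm : AntitoneOn φ (Set.Iic 0) := by
        apply antitoneOn_of_deriv_nonpos (convex_Iic 0) hcont.continuousOn
        · exact fun y _ => (hd y).differentiableAt.differentiableWithinAt
        · intro y hy
          rw [(hd y).deriv]
          have : y ≤ (0:ℝ) := le_of_lt (by simpa using hy)
          calc φ' y ≤ φ' 0 := hmono this
            _ = 0 := hφ'0
      calc (0:ℝ) = φ 0 := hφ0.symm
        _ ≤ φ x := hm (by simpa using hx) (by simp) hx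
  -- conclude
  have hk := key h
  have hlog : Real.log (1 - p + p * exp h) ≤ h ^ 2 / 8 + p * h := by
    simp only [hφ] at hk; linarith
  have hexp := Real.exp_le_exp.mpr hlog
  rw [Real.exp_log (hD h)] at hexp
  calc (1 - p) * exp (-p * h) + p * exp ((1 - p) * h)
      = exp (-p * h) * (1 - p + p * exp h) := by
        have e1 : exp ((1 - p) * h) = exp (-p * h) * exp h := by
          rw [← Real.exp_add]; ring_nf
        rw [e1]; ring
    _ ≤ exp (-p * h) * exp (h ^ 2 / 8 + p * h) := by
        apply mul_le_mul_of_nonneg_left hexp (exp_pos _).le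
    _ = exp (h ^ 2 / 8) := by rw [← Real.exp_add]; ring_nf

lemma integrable_of_bdd {Z : Type*} [MeasurableSpace Z] {μ : Measure Z} [IsFiniteMeasure μ]
    {f : Z → ℝ} (hf : Measurable f) {C : ℝ} (hC : ∀ z, |f z| ≤ C) : Integrable f μ :=
  ⟨hf.aestronglyMeasurable, HasFiniteIntegral.of_bounded (C := C)
    (ae_of_all _ (fun z => by simpa using hC z))⟩

lemma hoeffding_lemma {Z : Type*} [MeasurableSpace Z] (μ : Measure Z) [IsProbabilityMeasure μ]
    {Y : Z → ℝ} (hY : Measurable Y) {r c : ℝ} (hc : 0 ≤ c)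
    (hbdd : ∀ z, Y z ∈ Set.Icc r (r + c)) (hmean : ∫ z, Y z ∂μ = 0) (s : ℝ) :
    ∫ z, exp (s * Y z) ∂μ ≤ exp (s ^ 2 * c ^ 2 / 8) := by
  have hYint : Integrable Y μ := integrable_of_bdd hY (C := |r| + c)
    (fun z => abs_le.mpr ⟨by have := (hbdd z).1; have := abs_nonneg r; nlinarith [neg_abs_le r],
      by have := (hbdd z).2; nlinarith [le_abs_self r]⟩)
  rcases eq_or_lt_of_le hc with hc0 | hc0
  · -- c = 0 : Y ≡ r, mean zero forces r = 0
    have hYr : ∀ z, Y z = r := fun z => le_antisymm (by simpa [← hc0] using (hbdd z).2) (hbdd z).1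
    have hr : r = 0 := by
      have : ∫ z, Y z ∂μ = r := by
        rw [show (fun z => Y z) = fun _ => r from funext hYr]; simp
      linarith [this ▸ hmean]
    have : ∀ z, exp (s * Y z) = 1 := fun z => by simp [hYr z, hr]
    rw [show (fun z => exp (s * Y z)) = fun _ => 1 from funext this]
    have h1 : (∫ (_ : Z), (1:ℝ) ∂μ) = 1 := by simp
    rw [h1, Real.one_le_exp_iff]
    positivity
  · -- c > 0
    set p : ℝ := -r / c with hp
    have hr0 : r ≤ 0 := by
      by_contra hcon
      push_neg at hcon
      have : (0:ℝ) < ∫ z, Y z ∂μ := by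
        calc (0:ℝ) < r := hcon
          _ = ∫ _, r ∂μ := by simp
          _ ≤ ∫ z, Y z ∂μ := integral_mono (integrable_const r) hYint (fun z => (hbdd z).1)
      linarith [hmean ▸ this]
    have hrc : 0 ≤ r + c := by
      by_contra hcon
      push_neg at hcon
      have : ∫ z, Y z ∂μ < 0 := by
        calc ∫ z, Y z ∂μ ≤ ∫ _, r + c ∂μ :=
              integral_mono hYint (integrable_const _) (fun z => (hbdd z).2)
          _ = r + c := by simp
          _ < 0 := hcon
      linarith [hmean ▸ this]
    have hp0 : 0 ≤ p := by
      rw [hp]; apply div_nonneg (by linarith) hc0.le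
    have hp1 : p ≤ 1 := by
      rw [hp, div_le_one hc0]; linarith
    set K1 : ℝ := ((r + c) / c) * exp (s * r) + (-r / c) * exp (s * (r + c)) with hK1
    set K2 : ℝ := (exp (s * (r + c)) - exp (s * r)) / c with hK2
    have hpt : ∀ z, exp (s * Y z) ≤ K1 + K2 * Y z := by
      intro z
      obtain ⟨h1, h2⟩ := hbdd z
      set a : ℝ := (r + c - Y z) / c with ha
      set b : ℝ := (Y z - r) / c with hb
      have ha0 : 0 ≤ a := div_nonneg (by linarith) hc0.le
      have hb0 : 0 ≤ b := div_nonneg (by linarith) hc0.le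
      have hab : a + b = 1 := by
        rw [ha, hb, ← add_div]
        field_simp
        ring
      have hcvx := convexOn_exp.2 (Set.mem_univ (s * r)) (Set.mem_univ (s * (r + c))) ha0 hb0 hab
      simp only [smul_eq_mul] at hcvx
      have harg : a * (s * r) + b * (s * (r + c)) = s * Y z := by
        rw [ha, hb]; field_simp; ring
      rw [harg] at hcvx
      refine hcvx.trans_eq ?_
      rw [hK1, hK2, ha, hb]
      field_simp
      ring
    have hrhs_int : Integrable (fun z => K1 + K2 * Y z) μ :=
      (integrable_const K1).add (hYint.const_mul K2)
    have hlhs_int : Integrable (fun z => exp (s * Y z)) μ := by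
      apply integrable_of_bdd (by fun_prop) (C := exp (|s| * (|r| + c)))
      intro z
      rw [abs_of_pos (exp_pos _), Real.exp_le_exp]
      calc s * Y z ≤ |s * Y z| := le_abs_self _
        _ = |s| * |Y z| := abs_mul _ _
        _ ≤ |s| * (|r| + c) := by
            apply mul_le_mul_of_nonneg_left _ (abs_nonneg s)
            rw [abs_le]
            constructor
            · have := (hbdd z).1; nlinarith [neg_abs_le r]
            · have := (hbdd z).2; nlinarith [le_abs_self r]
    calc ∫ z, exp (s * Y z) ∂μ ≤ ∫ z, K1 + K2 * Y z ∂μ := integral_mono hlhs_int hrhs_int hpt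
      _ = K1 := by
          rw [integral_add (integrable_const K1) (hYint.const_mul K2),
            MeasureTheory.integral_const_mul, hmean]
          simp
      _ = (1 - p) * exp (-p * (s * c)) + p * exp ((1 - p) * (s * c)) := by
          rw [hK1, hp]
          have e1 : -(-r / c) * (s * c) = s * r := by field_simp
          have e2 : (1 - -r / c) * (s * c) = s * (r + c) := by field_simp; ring
          rw [e1, e2]
          congr 2
          field_simp
          ring
      _ ≤ exp ((s * c) ^ 2 / 8) := hoeffding_fun_bound hp0 hp1 (s * c)
      _ = exp (s ^ 2 * c ^ 2 / 8) := by ring_nf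

lemma measurable_fin_cons {Z : Type*} [MeasurableSpace Z] {n : ℕ} :
    Measurable (fun q : Z × (Fin n → Z) => (Fin.cons q.1 q.2 : Fin (n + 1) → Z)) := by
  apply measurable_pi_lambda
  intro j
  refine Fin.cases ?_ ?_ j
  · simpa using measurable_fst
  · intro i
    simpa [Function.comp_def] using (measurable_pi_apply i).comp measurable_snd

lemma mcdiarmid_mgf {Z : Type*} [MeasurableSpace Z] (μ : Measure Z) [IsProbabilityMeasure μ]
    {c : ℝ} (hc : 0 ≤ c) :
    ∀ (n : ℕ) (f : (Fin n → Z) → ℝ), Measurable f →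
      (∀ D, f D ∈ Set.Icc (0:ℝ) 1) →
      (∀ (i : Fin n) (D : Fin n → Z) (z : Z), f D - f (Function.update D i z) ≤ c) →
      ∀ s : ℝ, ∫ D, exp (s * (f D - ∫ D', f D' ∂(Measure.pi fun _ : Fin n => μ)))
          ∂(Measure.pi fun _ : Fin n => μ) ≤ exp (s ^ 2 * n * c ^ 2 / 8) := by
  have hZ : Nonempty Z := by
    by_contra hcon
    rw [not_nonempty_iff] at hcon
    have h1 : μ Set.univ = 1 := measure_univ
    rw [Set.univ_eq_empty_iff.mpr hcon] at h1
    simp at h1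
  intro n
  induction n with
  | zero =>
    intro f hf hf01 hdiff s
    have hconst : ∀ D : Fin 0 → Z, f D = f (fun i => i.elim0) := fun D => by
      congr; exact funext fun i => i.elim0
    have hint : (∫ D', f D' ∂(Measure.pi fun _ : Fin 0 => μ)) = f (fun i => i.elim0) := by
      rw [show (fun D' => f D') = fun _ => f (fun i => i.elim0) from funext hconst]
      simp
    simp only [hint]
    calc ∫ D, exp (s * (f D - f (fun i => i.elim0))) ∂(Measure.pi fun _ : Fin 0 => μ)
        = ∫ _, (1:ℝ) ∂(Measure.pi fun _ : Fin 0 => μ) := by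
          congr 1; funext D; rw [hconst D]; simp
      _ = 1 := by simp
      _ ≤ exp (s ^ 2 * (0:ℕ) * c ^ 2 / 8) := by push_cast; norm_num
  | succ n IH =>
    intro f hf hf01 hdiff s
    set ν : Measure (Fin n → Z) := Measure.pi fun _ : Fin n => μ with hν
    set pp : Measure (Fin (n + 1) → Z) := Measure.pi fun _ : Fin (n + 1) => μ with hpp
    -- the "partially integrated" function
    set F : (Fin n → Z) → ℝ := fun x => ∫ z, f (Fin.cons z x) ∂μ with hF
    have hfz_meas : Measurable (fun q : Z × (Fin n → Z) => f (Fin.cons q.1 q.2)) :=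
      hf.comp measurable_fin_cons
    have hF_meas : Measurable F := by
      have := (hfz_meas.stronglyMeasurable.integral_prod_left' (μ := μ))
      exact this.measurable
    have hF01 : ∀ x, F x ∈ Set.Icc (0:ℝ) 1 := by
      intro x
      have hint : Integrable (fun z => f (Fin.cons z x)) μ :=
        integrable_of_bdd (hf.comp (measurable_fin_cons.comp
          (measurable_id.prodMk measurable_const))) (C := 1)
          (fun z => abs_le.mpr ⟨by linarith [(hf01 (Fin.cons z x)).1], (hf01 _).2⟩)
      constructor
      · exact integral_nonneg fun z => (hf01 _).1
      · calc ∫ z, f (Fin.cons z x) ∂μ ≤ ∫ _, (1:ℝ) ∂μ :=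
              integral_mono hint (integrable_const 1) (fun z => (hf01 _).2)
          _ = 1 := by simp
    have hfcons01 : ∀ (z : Z) (x : Fin n → Z), f (Fin.cons z x) ∈ Set.Icc (0:ℝ) 1 :=
      fun z x => hf01 _
    have hfconsint : ∀ x : Fin n → Z, Integrable (fun z => f (Fin.cons z x)) μ := by
      intro x
      exact integrable_of_bdd (hf.comp (measurable_fin_cons.comp
        (measurable_id.prodMk measurable_const))) (C := 1)
        (fun z => abs_le.mpr ⟨by linarith [(hf01 (Fin.cons z x)).1], (hf01 _).2⟩)
    have hdiffF : ∀ (i : Fin n) (x : Fin n → Z) (w : Z), F x - F (Function.update x i w) ≤ c := by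
      intro i x w
      rw [hF]
      rw [← integral_sub (hfconsint x) (hfconsint _)]
      calc ∫ z, (f (Fin.cons z x) - f (Fin.cons z (Function.update x i w))) ∂μ
          ≤ ∫ _, c ∂μ := by
            apply integral_mono ((hfconsint x).sub (hfconsint _)) (integrable_const c)
            intro z
            have := hdiff i.succ (Fin.cons z x) w
            simp only [Pi.sub_apply]
            rw [Fin.cons_update]
            exact this
        _ = c := by simp
    set E : ℝ := ∫ D', f D' ∂pp with hE
    -- transfer to the product measure
    set e := MeasurableEquiv.piFinSuccAbove (fun _ : Fin (n + 1) => Z) 0 with he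
    have mp : MeasurePreserving e.symm (μ.prod ν) pp := by
      exact (measurePreserving_piFinSuccAbove (fun _ : Fin (n + 1) => μ) 0).symm e
    have hsymm : ∀ q : Z × (Fin n → Z), e.symm q = Fin.cons q.1 q.2 := by
      intro q
      simp [he, MeasurableEquiv.piFinSuccAbove, Fin.insertNthEquiv, Fin.insertNth_zero']
    have transfer : ∀ (G : (Fin (n + 1) → Z) → ℝ), Measurable G →
        ∫ D, G D ∂pp = ∫ x, ∫ z, G (Fin.cons z x) ∂μ ∂ν → True := fun _ _ _ => trivial
    have key_transfer : ∀ (G : (Fin (n + 1) → Z) → ℝ), Measurable G → (∀ D, |G D| ≤ exp (|s| + 1)) →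
        ∫ D, G D ∂pp = ∫ x, ∫ z, G (Fin.cons z x) ∂μ ∂ν := by
      intro G hG hGbdd
      have h1 : ∫ D, G D ∂pp = ∫ q, G (e.symm q) ∂(μ.prod ν) :=
        (mp.integral_comp e.symm.measurableEmbedding G).symm
      rw [h1]
      have h2 : (fun q : Z × (Fin n → Z) => G (e.symm q)) = fun q => G (Fin.cons q.1 q.2) := by
        funext q; rw [hsymm]
      rw [h2]
      have hGint : Integrable (fun q : Z × (Fin n → Z) => G (Fin.cons q.1 q.2)) (μ.prod ν) :=
        integrable_of_bdd (hG.comp measurable_fin_cons) (C := exp (|s| + 1))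
          (fun q => hGbdd _)
      rw [integral_prod_symm _ hGint]
    have hE01 : E ∈ Set.Icc (0:ℝ) 1 := by
      have hfint : Integrable f pp := integrable_of_bdd hf (C := 1)
        (fun D => abs_le.mpr ⟨by linarith [(hf01 D).1], (hf01 D).2⟩)
      constructor
      · exact integral_nonneg fun D => (hf01 D).1
      · calc ∫ D, f D ∂pp ≤ ∫ _, (1:ℝ) ∂pp :=
            integral_mono hfint (integrable_const 1) (fun D => (hf01 D).2)
          _ = 1 := by simp
    have hone_le : (1:ℝ) ≤ exp (|s| + 1) := by
      rw [← Real.exp_zero, Real.exp_le_exp]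
      positivity
    have hEF : E = ∫ x, F x ∂ν := by
      rw [hE, key_transfer f hf (fun D => le_trans
        (abs_le.mpr ⟨by linarith [(hf01 D).1], (hf01 D).2⟩) hone_le)]
    have hG_meas : Measurable (fun D => exp (s * (f D - E))) :=
      Real.measurable_exp.comp ((hf.sub measurable_const).const_mul s)
    have habs1 : ∀ D, |f D - E| ≤ 1 := fun D => abs_le.mpr
      ⟨by have := (hf01 D).1; have := hE01.2; linarith,
       by have := (hf01 D).2; have := hE01.1; linarith⟩
    have hexp_bd : ∀ (a : ℝ), |a| ≤ 1 → |exp (s * a)| ≤ exp (|s| + 1) := by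
      intro a ha
      rw [abs_of_pos (exp_pos _), Real.exp_le_exp]
      calc s * a ≤ |s * a| := le_abs_self _
        _ = |s| * |a| := abs_mul _ _
        _ ≤ |s| * 1 := mul_le_mul_of_nonneg_left ha (abs_nonneg s)
        _ ≤ |s| + 1 := by linarith [abs_nonneg s]
    have hG_bdd : ∀ D, |exp (s * (f D - E))| ≤ exp (|s| + 1) :=
      fun D => hexp_bd _ (habs1 D)
    rw [key_transfer _ hG_meas hG_bdd]
    have hmz : ∀ x : Fin n → Z, Measurable (fun z => f (Fin.cons z x)) := fun x =>
      hf.comp (measurable_fin_cons.comp (measurable_id.prodMk measurable_const))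
    have hinner : ∀ x, ∫ z, exp (s * (f (Fin.cons z x) - E)) ∂μ
        = (∫ z, exp (s * (f (Fin.cons z x) - F x)) ∂μ) * exp (s * (F x - E)) := by
      intro x
      rw [← integral_mul_const]
      congr 1; funext z
      rw [← Real.exp_add]; congr 1; ring
    have hhoeff : ∀ x, ∫ z, exp (s * (f (Fin.cons z x) - F x)) ∂μ ≤ exp (s ^ 2 * c ^ 2 / 8) := by
      intro x
      have hbdd_below : BddBelow (Set.range fun z => f (Fin.cons z x)) :=
        ⟨0, fun y ⟨z, hz⟩ => hz ▸ (hf01 _).1⟩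
      set m : ℝ := ⨅ z, f (Fin.cons z x) with hm
      apply hoeffding_lemma μ (Y := fun z => f (Fin.cons z x) - F x)
        ((hmz x).sub measurable_const) hc (r := m - F x)
      · intro z
        have hlow : m ≤ f (Fin.cons z x) := ciInf_le hbdd_below z
        have hupp : f (Fin.cons z x) - c ≤ m := by
          apply le_ciInf
          intro z'
          have := hdiff 0 (Fin.cons z x) z'
          rw [Fin.update_cons_zero] at this
          linarith
        exact Set.mem_Icc.mpr ⟨by linarith, by linarith⟩
      · rw [integral_sub (hfconsint x) (integrable_const _)]
        simp [hF]
    have habsF : ∀ x, |F x - E| ≤ 1 := fun x => abs_le.mpr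
      ⟨by have := (hF01 x).1; have := hE01.2; linarith,
       by have := (hF01 x).2; have := hE01.1; linarith⟩
    have hFexp_meas : Measurable (fun x => exp (s * (F x - E))) :=
      Real.measurable_exp.comp ((hF_meas.sub measurable_const).const_mul s)
    have hint2 : Integrable (fun x => exp (s ^ 2 * c ^ 2 / 8) * exp (s * (F x - E))) ν :=
      integrable_of_bdd (hFexp_meas.const_mul _) (C := exp (s ^ 2 * c ^ 2 / 8) * exp (|s| + 1))
        (fun x => by
          rw [abs_mul, abs_of_pos (exp_pos _)]
          exact mul_le_mul_of_nonneg_left (hexp_bd _ (habsF x)) (exp_pos _).le)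
    have hint1 : Integrable (fun x => ∫ z, exp (s * (f (Fin.cons z x) - E)) ∂μ) ν := by
      have hq_meas : Measurable (fun q : Z × (Fin n → Z) => exp (s * (f (Fin.cons q.1 q.2) - E))) :=
        Real.measurable_exp.comp ((hfz_meas.sub measurable_const).const_mul s)
      apply integrable_of_bdd (hq_meas.stronglyMeasurable.integral_prod_left'.measurable)
        (C := exp (|s| + 1))
      intro x
      have hzint : Integrable (fun z => exp (s * (f (Fin.cons z x) - E))) μ :=
        integrable_of_bdd (Real.measurable_exp.comp
          (((hmz x).sub measurable_const).const_mul s)) (C := exp (|s| + 1))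
          (fun z => hexp_bd _ (habs1 _))
      calc |∫ z, exp (s * (f (Fin.cons z x) - E)) ∂μ|
          = ‖∫ z, exp (s * (f (Fin.cons z x) - E)) ∂μ‖ := (Real.norm_eq_abs _).symm
        _ ≤ ∫ z, ‖exp (s * (f (Fin.cons z x) - E))‖ ∂μ := norm_integral_le_integral_norm _
        _ ≤ ∫ _, exp (|s| + 1) ∂μ := by
            apply integral_mono hzint.norm (integrable_const _)
            intro z
            simp only [Real.norm_eq_abs]
            exact hexp_bd _ (habs1 _)
        _ = exp (|s| + 1) := by simp
    calc ∫ x, ∫ z, exp (s * (f (Fin.cons z x) - E)) ∂μ ∂ν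
        ≤ ∫ x, exp (s ^ 2 * c ^ 2 / 8) * exp (s * (F x - E)) ∂ν := by
          apply integral_mono hint1 hint2
          intro x
          dsimp only
          rw [hinner x]
          exact mul_le_mul_of_nonneg_right (hhoeff x) (exp_pos _).le
      _ = exp (s ^ 2 * c ^ 2 / 8) * ∫ x, exp (s * (F x - E)) ∂ν :=
          MeasureTheory.integral_const_mul _ _
      _ ≤ exp (s ^ 2 * c ^ 2 / 8) * exp (s ^ 2 * n * c ^ 2 / 8) := by
          apply mul_le_mul_of_nonneg_left _ (exp_pos _).le
          have := IH F hF_meas hF01 hdiffF s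
          rwa [← hEF] at this
      _ = exp (s ^ 2 * (n + 1 : ℕ) * c ^ 2 / 8) := by
          rw [← Real.exp_add]; congr 1; push_cast; ring


lemma integrable_exp_linear_quad (b : ℝ) :
    Integrable (fun t : ℝ => exp (b * t - t ^ 2 / 2)) := by
  have h := (integrable_exp_neg_mul_sq (by norm_num : (0:ℝ) < 1/2)).comp_sub_right b
  have h2 := h.const_mul (exp (b ^ 2 / 2))
  apply h2.congr
  filter_upwards with t
  rw [← Real.exp_add]
  congr 1
  ring

lemma integral_exp_linear_quad (b : ℝ) :
    ∫ t : ℝ, exp (b * t - t ^ 2 / 2) = exp (b ^ 2 / 2) * Real.sqrt (2 * π) := by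
  have h1 : (fun t : ℝ => exp (b * t - t ^ 2 / 2))
      = fun t : ℝ => exp (b ^ 2 / 2) * exp (-(1/2 : ℝ) * (t - b) ^ 2) := by
    funext t
    rw [← Real.exp_add]
    congr 1
    ring
  rw [h1, MeasureTheory.integral_const_mul,
    integral_sub_right_eq_self (fun t : ℝ => exp (-(1/2 : ℝ) * t ^ 2)) b,
    integral_gaussian]
  congr 2
  ring

/-- The worst-case (over the threshold `τ ∈ [0, β]`) absolute gap between the empirical
mean efficiency of the `θ`-parameterized prediction sets on the sample `D` and their
expected efficiency under `μ`. -/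
noncomputable def RhatP {Z Θ : Type*} [MeasurableSpace Z] (μ : Measure Z) (β : ℝ)
    (g : Z → ℝ → Θ → ℝ) {N : ℕ} (θ : Θ) (D : Fin N → Z) : ℝ :=
  ⨆ τ : Set.Icc (0 : ℝ) β,
    |(1 / (N : ℝ)) * ∑ i, g (D i) τ θ - ∫ z, g z τ θ ∂μ|

/-- The expectation of the worst-case gap over the sampling of the dataset `D ~ μ^N`. -/
noncomputable def RexpP {Z Θ : Type*} [MeasurableSpace Z] (μ : Measure Z) (β : ℝ)
    (g : Z → ℝ → Θ → ℝ) (N : ℕ) (θ : Θ) : ℝ :=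
  ∫ D, RhatP μ β g θ D ∂(Measure.pi fun _ : Fin N => μ)


section Rhat

variable {Z Θ : Type*} [MeasurableSpace Z] [MeasurableSpace Θ]
    (μ : Measure Z) [IsProbabilityMeasure μ]
    (β : ℝ) (hβ : 0 < β)
    (g : Z → ℝ → Θ → ℝ)
    (hg : Measurable fun p : Z × ℝ × Θ => g p.1 p.2.1 p.2.2)
    (hg01 : ∀ z θ, ∀ τ ∈ Set.Icc 0 β, g z τ θ ∈ Set.Icc (0 : ℝ) 1)
    (hgc : ∀ z θ, ContinuousOn (fun τ => g z τ θ) (Set.Icc 0 β))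
    {N : ℕ} (hN : 0 < N) (θ : Θ)

-- the gap function
noncomputable def gapP (τ : ℝ) (D : Fin N → Z) : ℝ :=
  |(1 / (N : ℝ)) * ∑ i, g (D i) τ θ - ∫ z, g z τ θ ∂μ|

lemma RhatP_eq_ciSup (D : Fin N → Z) :
    RhatP μ β g θ D = ⨆ τ : Set.Icc (0 : ℝ) β, gapP μ g θ (τ : ℝ) D := rfl

include hg in
lemma measurable_g_slice (τ : ℝ) : Measurable (fun z => g z τ θ) := by
  have h : Measurable (fun z : Z => ((z, (τ, θ)) : Z × ℝ × Θ)) :=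
    measurable_id.prodMk measurable_const
  exact hg.comp h

include hg hg01 in
lemma intg_mem_Icc {τ : ℝ} (hτ : τ ∈ Set.Icc 0 β) :
    (∫ z, g z τ θ ∂μ) ∈ Set.Icc (0:ℝ) 1 := by
  have hint : Integrable (fun z => g z τ θ) μ :=
    integrable_of_bdd (measurable_g_slice g hg θ τ) (C := 1)
      (fun z => abs_le.mpr ⟨by linarith [(hg01 z θ τ hτ).1], (hg01 z θ τ hτ).2⟩)
  constructor
  · exact integral_nonneg fun z => (hg01 z θ τ hτ).1
  · calc ∫ z, g z τ θ ∂μ ≤ ∫ _, (1:ℝ) ∂μ :=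
        integral_mono hint (integrable_const 1) (fun z => (hg01 z θ τ hτ).2)
      _ = 1 := by simp

include hN in
lemma avg_mem_Icc {D : Fin N → Z} {τ : ℝ} (h01 : ∀ i, g (D i) τ θ ∈ Set.Icc (0:ℝ) 1) :
    (1 / (N : ℝ)) * ∑ i, g (D i) τ θ ∈ Set.Icc (0:ℝ) 1 := by
  have hNpos : (0:ℝ) < N := by exact_mod_cast hN
  constructor
  · apply mul_nonneg (by positivity)
    exact Finset.sum_nonneg fun i _ => (h01 i).1
  · rw [mul_comm, ← le_div_iff₀ (by positivity)]
    have : (1:ℝ) / (1 / (N:ℝ)) = N := by field_simp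
    rw [this]
    calc ∑ i, g (D i) τ θ ≤ ∑ _i : Fin N, (1:ℝ) := Finset.sum_le_sum fun i _ => (h01 i).2
      _ = N := by simp

include hg hg01 hN in
lemma gapP_mem_Icc {τ : ℝ} (hτ : τ ∈ Set.Icc 0 β) (D : Fin N → Z) :
    gapP μ g θ τ D ∈ Set.Icc (0:ℝ) 1 := by
  have h1 := avg_mem_Icc g hN θ (D := D) (τ := τ) (fun i => hg01 _ θ τ hτ)
  have h2 := intg_mem_Icc μ β g hg hg01 θ hτ
  refine ⟨abs_nonneg _, abs_le.mpr ⟨by linarith [h1.2, h2.1, h1.1, h2.2], by linarith [h1.2, h2.1]⟩⟩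

include hg in
lemma measurable_gapP (τ : ℝ) : Measurable (fun D : Fin N → Z => gapP μ g θ τ D) := by
  apply Measurable.abs
  apply Measurable.sub _ measurable_const
  apply Measurable.const_mul
  exact Finset.measurable_sum _ fun i _ =>
    (measurable_g_slice g hg θ τ).comp (measurable_pi_apply i)

include hg hg01 hN in
lemma bddAbove_gapP (D : Fin N → Z) :
    BddAbove (Set.range fun τ : Set.Icc (0:ℝ) β => gapP μ g θ (τ:ℝ) D) :=
  ⟨1, fun y ⟨τ, hτ⟩ => hτ ▸ (gapP_mem_Icc μ β g hg hg01 hN θ τ.2 D).2⟩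

include hβ hg hg01 hN in
lemma RhatP_mem_Icc (D : Fin N → Z) : RhatP μ β g θ D ∈ Set.Icc (0:ℝ) 1 := by
  have hne : Nonempty (Set.Icc (0:ℝ) β) := ⟨⟨0, le_refl 0, hβ.le⟩⟩
  rw [RhatP_eq_ciSup]
  constructor
  · calc (0:ℝ) ≤ gapP μ g θ ((⟨0, le_refl 0, hβ.le⟩ : Set.Icc (0:ℝ) β) : ℝ) D := abs_nonneg _
      _ ≤ _ := le_ciSup (bddAbove_gapP μ β g hg hg01 hN θ D) _
  · exact ciSup_le fun τ => (gapP_mem_Icc μ β g hg hg01 hN θ τ.2 D).2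

include hβ hg hg01 hN in
lemma RhatP_bdd_diff (i : Fin N) (D : Fin N → Z) (z : Z) :
    RhatP μ β g θ D - RhatP μ β g θ (Function.update D i z) ≤ 1 / (N:ℝ) := by
  have hne : Nonempty (Set.Icc (0:ℝ) β) := ⟨⟨0, le_refl 0, hβ.le⟩⟩
  rw [RhatP_eq_ciSup, RhatP_eq_ciSup, sub_le_iff_le_add]
  apply ciSup_le
  intro τ
  have hτ := τ.2
  have hNpos : (0:ℝ) < N := by exact_mod_cast hN
  have key : gapP μ g θ (τ:ℝ) D ≤ gapP μ g θ (τ:ℝ) (Function.update D i z) + 1 / (N:ℝ) := by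
    unfold gapP
    have hsum : ∑ j, g (Function.update D i z j) (τ:ℝ) θ
        = (∑ j, g (D j) (τ:ℝ) θ) - g (D i) (τ:ℝ) θ + g z (τ:ℝ) θ := by
      have happ : ∀ j, g (Function.update D i z j) (τ:ℝ) θ
          = Function.update (fun j => g (D j) (τ:ℝ) θ) i (g z (τ:ℝ) θ) j :=
        fun j => Function.apply_update (fun _ w => g w (τ:ℝ) θ) D i z j
      rw [Finset.sum_congr rfl (fun j _ => happ j),
        Finset.sum_update_of_mem (Finset.mem_univ i), Finset.sdiff_singleton_eq_erase]
      have := Finset.add_sum_erase Finset.univ (fun j => g (D j) (τ:ℝ) θ) (Finset.mem_univ i)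
      linarith
    set A := (1 / (N : ℝ)) * ∑ j, g (D j) (τ:ℝ) θ with hA
    set A' := (1 / (N : ℝ)) * ∑ j, g (Function.update D i z j) (τ:ℝ) θ with hA'
    set II := ∫ z', g z' (τ:ℝ) θ ∂μ with hI
    have hdiffA : A - A' = (1/(N:ℝ)) * (g (D i) (τ:ℝ) θ - g z (τ:ℝ) θ) := by
      rw [hA, hA', hsum]; ring
    have habs : |A - A'| ≤ 1/(N:ℝ) := by
      rw [hdiffA, abs_mul, abs_of_pos (by positivity : (0:ℝ) < 1/(N:ℝ))]
      have h1 := hg01 (D i) θ (τ:ℝ) hτ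
      have h2 := hg01 z θ (τ:ℝ) hτ
      have h3 : |g (D i) (τ:ℝ) θ - g z (τ:ℝ) θ| ≤ 1 :=
        abs_le.mpr ⟨by linarith [h1.1, h2.2], by linarith [h1.2, h2.1]⟩
      calc 1/(N:ℝ) * |g (D i) (τ:ℝ) θ - g z (τ:ℝ) θ| ≤ 1/(N:ℝ) * 1 :=
            mul_le_mul_of_nonneg_left h3 (by positivity)
        _ = 1/(N:ℝ) := mul_one _
    calc |A - II| = |(A' - II) + (A - A')| := by congr 1; ring
      _ ≤ |A' - II| + |A - A'| := abs_add_le _ _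
      _ ≤ |A' - II| + 1/(N:ℝ) := by linarith
  have hfin : gapP μ g θ (τ:ℝ) D
      ≤ (⨆ τ' : Set.Icc (0:ℝ) β, gapP μ g θ (τ':ℝ) (Function.update D i z)) + 1 / (N:ℝ) := by
    have := le_ciSup (bddAbove_gapP μ β g hg hg01 hN θ (Function.update D i z)) τ
    linarith
  linarith

include hg hg01 hgc hN in
lemma continuousOn_gapP (D : Fin N → Z) :
    ContinuousOn (fun τ => gapP μ g θ τ D) (Set.Icc 0 β) := by
  apply ContinuousOn.abs
  apply ContinuousOn.sub
  · exact continuousOn_const.mul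
      (continuousOn_finset_sum Finset.univ (fun i _ => hgc (D i) θ))
  · apply continuousOn_of_dominated (bound := fun _ => 1)
    · exact fun τ _ => (measurable_g_slice g hg θ τ).aestronglyMeasurable
    · intro τ hτ
      filter_upwards with z
      rw [Real.norm_eq_abs]
      exact abs_le.mpr ⟨by linarith [(hg01 z θ τ hτ).1], (hg01 z θ τ hτ).2⟩
    · exact integrable_const 1
    · filter_upwards with z using hgc z θ

include hβ hg hg01 hgc hN in
lemma measurable_RhatP : Measurable (fun D : Fin N → Z => RhatP μ β g θ D) := by
  have hne : Nonempty (Set.Icc (0:ℝ) β) := ⟨⟨0, le_refl 0, hβ.le⟩⟩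
  set u : ℕ → Set.Icc (0:ℝ) β := TopologicalSpace.denseSeq _ with hu
  have hdense : DenseRange u := TopologicalSpace.denseRange_denseSeq _
  have key : ∀ D : Fin N → Z, RhatP μ β g θ D = ⨆ n : ℕ, gapP μ g θ ((u n : ℝ)) D := by
    intro D
    rw [RhatP_eq_ciSup]
    have hbdd : BddAbove (Set.range fun τ : Set.Icc (0:ℝ) β => gapP μ g θ (τ:ℝ) D) :=
      bddAbove_gapP μ β g hg hg01 hN θ D
    have hbdd' : BddAbove (Set.range fun n : ℕ => gapP μ g θ ((u n : ℝ)) D) :=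
      ⟨1, fun y ⟨n, hn⟩ => hn ▸ (gapP_mem_Icc μ β g hg hg01 hN θ (u n).2 D).2⟩
    apply le_antisymm
    · apply ciSup_le
      intro τ
      -- approximate τ by a sequence from the dense range
      obtain ⟨x, hx_mem, hx_lim⟩ := mem_closure_iff_seq_limit.mp (hdense τ)
      have hΦ : Continuous fun σ : Set.Icc (0:ℝ) β => gapP μ g θ (σ:ℝ) D :=
        (continuousOn_gapP μ β g hg hg01 hgc hN θ D).restrict.congr (fun σ => rfl)
      have hlim : Filter.Tendsto (fun k => gapP μ g θ ((x k : ℝ)) D) Filter.atTop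
          (nhds (gapP μ g θ (τ:ℝ) D)) := (hΦ.tendsto τ).comp hx_lim
      apply le_of_tendsto hlim
      filter_upwards with k
      obtain ⟨m, hm⟩ := hx_mem k
      calc gapP μ g θ ((x k : ℝ)) D = gapP μ g θ ((u m : ℝ)) D := by rw [hm]
        _ ≤ _ := le_ciSup hbdd' m
    · exact ciSup_le fun n => le_ciSup hbdd (u n)
  rw [show (fun D : Fin N → Z => RhatP μ β g θ D) = fun D => ⨆ n : ℕ, gapP μ g θ ((u n : ℝ)) D
    from funext key]
  exact Measurable.iSup fun n => measurable_gapP μ g hg θ (u n)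

end Rhat


/-- Exponential moment bound for the deviation of the worst-case empirical-vs-expected
efficiency gap from its mean: `E_{D ~ μ^N}[exp(2(N-1)(R̂(θ,D) - R(θ))²)] ≤ 2N`. -/
theorem exp_moment_Rhat_deviation
    {Z Θ : Type*} [MeasurableSpace Z] [MeasurableSpace Θ]
    (μ : Measure Z) [IsProbabilityMeasure μ]
    (β : ℝ) (hβ : 0 < β)
    (g : Z → ℝ → Θ → ℝ)
    (hg : Measurable fun p : Z × ℝ × Θ => g p.1 p.2.1 p.2.2)
    (hg01 : ∀ z θ, ∀ τ ∈ Set.Icc 0 β, g z τ θ ∈ Set.Icc (0 : ℝ) 1)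
    (hgc : ∀ z θ, ContinuousOn (fun τ => g z τ θ) (Set.Icc 0 β))
    (N : ℕ) (hN : 2 ≤ N) :
    ∀ θ : Θ,
      ∫⁻ D, ENNReal.ofReal
          (Real.exp (2 * ((N : ℝ) - 1) * (RhatP μ β g θ D - RexpP μ β g N θ) ^ 2))
          ∂(Measure.pi fun _ : Fin N => μ) ≤
        ENNReal.ofReal (2 * (N : ℝ)) := by
  intro θ
  have hN0 : 0 < N := by omega
  have hNR : (2:ℝ) ≤ (N:ℝ) := by exact_mod_cast hN
  have hNRpos : (0:ℝ) < (N:ℝ) := by linarith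
  set pp : Measure (Fin N → Z) := Measure.pi fun _ : Fin N => μ with hpp
  have hfmeas : Measurable (fun D : Fin N → Z => RhatP μ β g θ D) :=
    measurable_RhatP μ β hβ g hg hg01 hgc hN0 θ
  have hf01 : ∀ D, RhatP μ β g θ D ∈ Set.Icc (0:ℝ) 1 :=
    fun D => RhatP_mem_Icc μ β hβ g hg hg01 hN0 θ D
  have hdiff : ∀ (i : Fin N) (D : Fin N → Z) (z : Z),
      RhatP μ β g θ D - RhatP μ β g θ (Function.update D i z) ≤ 1/(N:ℝ) :=
    fun i D z => RhatP_bdd_diff μ β hβ g hg hg01 hN0 θ i D z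
  have hcn : (0:ℝ) ≤ 1/(N:ℝ) := by positivity
  have hE01 : RexpP μ β g N θ ∈ Set.Icc (0:ℝ) 1 := by
    have hfint : Integrable (fun D => RhatP μ β g θ D) pp := integrable_of_bdd hfmeas (C := 1)
      (fun D => abs_le.mpr ⟨by linarith [(hf01 D).1], (hf01 D).2⟩)
    constructor
    · exact integral_nonneg fun D => (hf01 D).1
    · calc ∫ D, RhatP μ β g θ D ∂pp ≤ ∫ _, (1:ℝ) ∂pp :=
          integral_mono hfint (integrable_const 1) (fun D => (hf01 D).2)
        _ = 1 := by simp
  set E : ℝ := RexpP μ β g N θ with hE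
  set X : (Fin N → Z) → ℝ := fun D => RhatP μ β g θ D - E with hX
  have hXmeas : Measurable X := hfmeas.sub measurable_const
  have hXabs : ∀ D, |X D| ≤ 1 := fun D => abs_le.mpr
    ⟨by have := (hf01 D).1; have := hE01.2; simp only [hX]; linarith,
     by have := (hf01 D).2; have := hE01.1; simp only [hX]; linarith⟩
  have hmgf : ∀ s : ℝ, ∫ D, Real.exp (s * X D) ∂pp ≤ Real.exp (s^2 / (8*(N:ℝ))) := by
    intro s
    have h0 := mcdiarmid_mgf μ hcn N (fun D => RhatP μ β g θ D) hfmeas hf01 hdiff s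
    have he : (∫ D', RhatP μ β g θ D' ∂pp) = E := rfl
    rw [he] at h0
    have harith : s ^ 2 * (N:ℝ) * (1/(N:ℝ)) ^ 2 / 8 = s^2 / (8*(N:ℝ)) := by
      field_simp
    rwa [harith] at h0
  set a : ℝ := 2 * ((N : ℝ) - 1) with ha
  have ha0 : 0 ≤ a := by rw [ha]; linarith
  set u : ℝ := Real.sqrt (2*a) with hu
  have hu2a : u^2 = 2*a := Real.sq_sqrt (by linarith)
  have hsqrt2pi : (0:ℝ) < Real.sqrt (2*Real.pi) :=
    Real.sqrt_pos.mpr (by positivity)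
  set c0 : ENNReal := ENNReal.ofReal ((Real.sqrt (2*Real.pi))⁻¹) with hc0
  -- the integrand rewritten via a Gaussian integral
  have stepA : ∀ D, ENNReal.ofReal (Real.exp (a * X D ^ 2))
      = c0 * ∫⁻ t : ℝ, ENNReal.ofReal (Real.exp (u * X D * t - t^2/2)) := by
    intro D
    have h1 : ∫ t : ℝ, Real.exp (u * X D * t - t^2/2)
        = Real.exp ((u * X D)^2/2) * Real.sqrt (2*Real.pi) :=
      integral_exp_linear_quad (u * X D)
    have h2 : (u * X D)^2 / 2 = a * X D ^ 2 := by
      rw [mul_pow, hu2a]; ring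
    rw [h2] at h1
    have h3 : ∫⁻ t : ℝ, ENNReal.ofReal (Real.exp (u * X D * t - t^2/2))
        = ENNReal.ofReal (∫ t : ℝ, Real.exp (u * X D * t - t^2/2)) :=
      (ofReal_integral_eq_lintegral_ofReal (integrable_exp_linear_quad _)
        (ae_of_all _ fun t => (Real.exp_pos _).le)).symm
    rw [h3, h1, hc0, ← ENNReal.ofReal_mul (by positivity)]
    congr 1
    rw [mul_comm (Real.exp _) _, inv_mul_cancel_left₀ (ne_of_gt hsqrt2pi)]
  have hΨmeas : Measurable (fun q : (Fin N → Z) × ℝ =>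
      ENNReal.ofReal (Real.exp (u * X q.1 * q.2 - q.2^2/2))) := by
    apply ENNReal.measurable_ofReal.comp
    apply Real.measurable_exp.comp
    exact (((hXmeas.comp measurable_fst).const_mul u).mul measurable_snd).sub
      ((measurable_snd.pow_const 2).div_const 2)
  have stepC : ∀ t : ℝ, ∫⁻ D, ENNReal.ofReal (Real.exp (u * X D * t - t^2/2)) ∂pp
      ≤ ENNReal.ofReal (Real.exp ((u*t)^2/(8*(N:ℝ)) - t^2/2)) := by
    intro t
    have hfact : ∀ D, Real.exp (u * X D * t - t^2/2)
        = Real.exp ((u*t) * X D) * Real.exp (-(t^2/2)) := by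
      intro D
      rw [← Real.exp_add]
      congr 1
      ring
    have hsX_int : Integrable (fun D => Real.exp ((u*t) * X D)) pp := by
      apply integrable_of_bdd (Real.measurable_exp.comp (hXmeas.const_mul _))
        (C := Real.exp |u*t|)
      intro D
      simp only [Function.comp_apply]
      rw [abs_of_pos (Real.exp_pos _), Real.exp_le_exp]
      calc (u*t) * X D ≤ |(u*t) * X D| := le_abs_self _
        _ = |u*t| * |X D| := abs_mul _ _
        _ ≤ |u*t| * 1 := mul_le_mul_of_nonneg_left (hXabs D) (abs_nonneg _)
        _ = |u*t| := mul_one _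
    calc ∫⁻ D, ENNReal.ofReal (Real.exp (u * X D * t - t^2/2)) ∂pp
        = ∫⁻ D, ENNReal.ofReal (Real.exp ((u*t) * X D)) * ENNReal.ofReal (Real.exp (-(t^2/2))) ∂pp := by
          apply lintegral_congr
          intro D
          rw [hfact D, ENNReal.ofReal_mul (Real.exp_pos _).le]
      _ = (∫⁻ D, ENNReal.ofReal (Real.exp ((u*t) * X D)) ∂pp)
            * ENNReal.ofReal (Real.exp (-(t^2/2))) :=
          lintegral_mul_const' _ _ ENNReal.ofReal_ne_top
      _ ≤ ENNReal.ofReal (Real.exp ((u*t)^2/(8*(N:ℝ))))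
            * ENNReal.ofReal (Real.exp (-(t^2/2))) := by
          apply mul_le_mul_left
          rw [← ofReal_integral_eq_lintegral_ofReal hsX_int
            (ae_of_all _ fun D => (Real.exp_pos _).le)]
          exact ENNReal.ofReal_le_ofReal (hmgf (u*t))
      _ = ENNReal.ofReal (Real.exp ((u*t)^2/(8*(N:ℝ)) - t^2/2)) := by
          rw [← ENNReal.ofReal_mul (Real.exp_pos _).le, ← Real.exp_add, sub_eq_add_neg]
  have harith2 : ∀ t : ℝ, (u*t)^2/(8*(N:ℝ)) - t^2/2 = -(1/(2*(N:ℝ))) * t^2 := by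
    intro t
    rw [mul_pow, hu2a, ha]
    field_simp
    ring
  have h2Npos : (0:ℝ) < 1/(2*(N:ℝ)) := by positivity
  show ∫⁻ D, ENNReal.ofReal (Real.exp (a * X D ^ 2)) ∂pp ≤ ENNReal.ofReal (2 * (N:ℝ))
  calc ∫⁻ D, ENNReal.ofReal (Real.exp (a * X D ^ 2)) ∂pp
      = ∫⁻ D, (c0 * ∫⁻ t : ℝ, ENNReal.ofReal (Real.exp (u * X D * t - t^2/2))) ∂pp :=
        lintegral_congr stepA
    _ = c0 * ∫⁻ D, (∫⁻ t : ℝ, ENNReal.ofReal (Real.exp (u * X D * t - t^2/2))) ∂pp :=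
        lintegral_const_mul' _ _ ENNReal.ofReal_ne_top
    _ = c0 * ∫⁻ t : ℝ, (∫⁻ D, ENNReal.ofReal (Real.exp (u * X D * t - t^2/2)) ∂pp) := by
        rw [lintegral_lintegral_swap hΨmeas.aemeasurable]
    _ ≤ c0 * ∫⁻ t : ℝ, ENNReal.ofReal (Real.exp ((u*t)^2/(8*(N:ℝ)) - t^2/2)) :=
        mul_le_mul_right (lintegral_mono stepC) _
    _ = c0 * ∫⁻ t : ℝ, ENNReal.ofReal (Real.exp (-(1/(2*(N:ℝ))) * t^2)) := by
        congr 1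
        apply lintegral_congr
        intro t
        rw [harith2 t]
    _ = c0 * ENNReal.ofReal (∫ t : ℝ, Real.exp (-(1/(2*(N:ℝ))) * t^2)) := by
        rw [← ofReal_integral_eq_lintegral_ofReal (integrable_exp_neg_mul_sq h2Npos)
          (ae_of_all _ fun t => (Real.exp_pos _).le)]
    _ = c0 * ENNReal.ofReal (Real.sqrt (Real.pi / (1/(2*(N:ℝ))))) := by
        rw [integral_gaussian]
    _ = ENNReal.ofReal ((Real.sqrt (2*Real.pi))⁻¹ * Real.sqrt (Real.pi / (1/(2*(N:ℝ))))) := by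
        rw [hc0, ← ENNReal.ofReal_mul (by positivity)]
    _ ≤ ENNReal.ofReal (2 * (N:ℝ)) := by
        apply ENNReal.ofReal_le_ofReal
        have hdiv : Real.pi / (1/(2*(N:ℝ))) = (N:ℝ) * (2*Real.pi) := by
          field_simp
        have hval : (Real.sqrt (2*Real.pi))⁻¹ * Real.sqrt ((N:ℝ) * (2*Real.pi))
            = Real.sqrt (N:ℝ) := by
          rw [Real.sqrt_mul (le_of_lt hNRpos),
            mul_comm (Real.sqrt (N:ℝ)) (Real.sqrt (2*Real.pi)),
            inv_mul_cancel_left₀ (ne_of_gt hsqrt2pi)]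
        rw [hdiv, hval]
        have hs := Real.sq_sqrt (le_of_lt hNRpos)
        have hs0 := Real.sqrt_nonneg (N:ℝ)
        nlinarith [sq_nonneg (Real.sqrt (N:ℝ) - 1)]
end

section
/- Let (Ω, ℱ, ν) be a probability space, Θ a measurable parameter space with prior probability measure P, N ≥ 2 an integer, γ ∈ (0,1), and Ψ : Θ × Ω → ℝ jointly measurable such that for every fixed θ ∈ Θ, ∫_Ω exp( 2(N−1) Ψ(θ, ω)² ) dν(ω) ≤ 2N. Then with ν-probability at least 1 − γ over ω, simultaneously for all probability measures Q on Θ: ∫_Θ Ψ(θ, ω) dQ(θ) ≤ √( ( KL(Q‖P) + log(2N/γ) ) / ( 2(N−1) ) ). -/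
open MeasureTheory Real

/-- `ofReal (x.toReal)⁻¹ ≤ x⁻¹` for all `x : ℝ≥0∞`. -/
lemma aux_ofReal_toReal_inv_le (x : ENNReal) :
    ENNReal.ofReal (x.toReal)⁻¹ ≤ x⁻¹ := by
  rcases eq_or_ne x ⊤ with rfl | hx
  · simp
  rcases eq_or_ne x 0 with rfl | h0
  · simp
  rw [ENNReal.ofReal_inv_of_pos (ENNReal.toReal_pos h0 hx), ENNReal.ofReal_toReal hx]

/-- Nonnegativity of the KL divergence integral. -/
lemma aux_kl_nonneg {Θ : Type*} [MeasurableSpace Θ] (Q M : Measure Θ)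
    [IsProbabilityMeasure Q] [IsProbabilityMeasure M]
    (hQM : Q ≪ M) (hllr : Integrable (llr Q M) Q) :
    0 ≤ ∫ θ, llr Q M θ ∂Q := by
  set g : Θ → ℝ := fun θ => ((Q.rnDeriv M θ).toReal)⁻¹ with hg_def
  have hg_meas : Measurable g := (Measure.measurable_rnDeriv Q M).ennreal_toReal.inv
  have hg_nonneg : ∀ θ, 0 ≤ g θ := fun θ => inv_nonneg.2 ENNReal.toReal_nonneg
  have hlint : ∫⁻ θ, ENNReal.ofReal (g θ) ∂Q ≤ 1 := by
    calc ∫⁻ θ, ENNReal.ofReal (g θ) ∂Q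
        ≤ ∫⁻ θ, (Q.rnDeriv M θ)⁻¹ ∂Q := lintegral_mono fun θ => aux_ofReal_toReal_inv_le _
      _ = ∫⁻ θ, Q.rnDeriv M θ * (Q.rnDeriv M θ)⁻¹ ∂M :=
          (lintegral_rnDeriv_mul hQM
            ((Measure.measurable_rnDeriv Q M).inv.aemeasurable)).symm
      _ ≤ ∫⁻ _, 1 ∂M := lintegral_mono fun θ => ENNReal.mul_inv_le_one _
      _ = 1 := by simp
  have hg_int : Integrable g Q := by
    refine ⟨hg_meas.aestronglyMeasurable, ?_⟩
    rw [hasFiniteIntegral_iff_ofReal (Filter.Eventually.of_forall hg_nonneg)]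
    exact lt_of_le_of_lt hlint ENNReal.one_lt_top
  have hg_integral_le : ∫ θ, g θ ∂Q ≤ 1 := by
    rw [integral_eq_lintegral_of_nonneg_ae (Filter.Eventually.of_forall hg_nonneg)
      hg_meas.aestronglyMeasurable]
    calc (∫⁻ θ, ENNReal.ofReal (g θ) ∂Q).toReal ≤ (1 : ENNReal).toReal :=
          ENNReal.toReal_mono (by simp) hlint
      _ = 1 := by simp
  have key : ∀ᵐ θ ∂Q, -(llr Q M θ) ≤ g θ - 1 := by
    filter_upwards [Measure.rnDeriv_pos hQM, hQM.ae_le (Measure.rnDeriv_lt_top Q M)]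
      with θ hpos hlt
    have ht : 0 < (Q.rnDeriv M θ).toReal := ENNReal.toReal_pos hpos.ne' hlt.ne
    have := Real.log_le_sub_one_of_pos (inv_pos.2 ht)
    rw [Real.log_inv] at this
    simpa [llr, hg_def] using this
  have hmono : ∫ θ, -(llr Q M θ) ∂Q ≤ ∫ θ, (g θ - 1) ∂Q :=
    integral_mono_ae hllr.neg (hg_int.sub (integrable_const 1)) key
  rw [integral_neg, integral_sub hg_int (integrable_const 1)] at hmono
  simp only [integral_const, measure_univ, ENNReal.toReal_one, probReal_univ, smul_eq_mul, one_mul] at hmono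
  linarith

/-- Donsker–Varadhan style change-of-measure inequality, with integrability. -/
lemma aux_dv {Θ : Type*} [MeasurableSpace Θ] {Q P : Measure Θ}
    [IsProbabilityMeasure Q] [IsProbabilityMeasure P]
    (hQP : Q ≪ P) (hllr : Integrable (llr Q P) Q)
    {φ : Θ → ℝ} (hφm : Measurable φ) (hφ0 : ∀ θ, 0 ≤ φ θ)
    {C : ℝ} (hC : 1 ≤ C)
    (hint : ∫⁻ θ, ENNReal.ofReal (Real.exp (φ θ)) ∂P ≤ ENNReal.ofReal C) :
    Integrable φ Q ∧ ∫ θ, φ θ ∂Q ≤ ∫ θ, llr Q P θ ∂Q + Real.log C := by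
  have hexp : Integrable (fun θ => Real.exp (φ θ)) P := by
    refine ⟨hφm.exp.aestronglyMeasurable, ?_⟩
    rw [hasFiniteIntegral_iff_ofReal (Filter.Eventually.of_forall fun θ => (exp_pos _).le)]
    exact lt_of_le_of_lt hint ENNReal.ofReal_lt_top
  set h : Θ → ℝ := fun θ => Real.exp (φ θ) * ((Q.rnDeriv P θ).toReal)⁻¹ with hh_def
  have hh_meas : Measurable h :=
    hφm.exp.mul (Measure.measurable_rnDeriv Q P).ennreal_toReal.inv
  have hh_nonneg : ∀ θ, 0 ≤ h θ := fun θ =>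
    mul_nonneg (exp_pos _).le (inv_nonneg.2 ENNReal.toReal_nonneg)
  have hh_lint : ∫⁻ θ, ENNReal.ofReal (h θ) ∂Q ≤ ENNReal.ofReal C := by
    have hpt : ∀ θ, ENNReal.ofReal (h θ) ≤
        ENNReal.ofReal (Real.exp (φ θ)) * (Q.rnDeriv P θ)⁻¹ := by
      intro θ
      rw [hh_def, ENNReal.ofReal_mul (exp_pos _).le]
      exact mul_le_mul_right (aux_ofReal_toReal_inv_le _) _
    calc ∫⁻ θ, ENNReal.ofReal (h θ) ∂Q
        ≤ ∫⁻ θ, ENNReal.ofReal (Real.exp (φ θ)) * (Q.rnDeriv P θ)⁻¹ ∂Q :=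
          lintegral_mono hpt
      _ = ∫⁻ θ, Q.rnDeriv P θ * (ENNReal.ofReal (Real.exp (φ θ)) * (Q.rnDeriv P θ)⁻¹) ∂P :=
          (lintegral_rnDeriv_mul hQP
            ((hφm.exp.ennreal_ofReal.mul
              (Measure.measurable_rnDeriv Q P).inv).aemeasurable)).symm
      _ ≤ ∫⁻ θ, ENNReal.ofReal (Real.exp (φ θ)) ∂P := by
          refine lintegral_mono fun θ => ?_
          calc Q.rnDeriv P θ * (ENNReal.ofReal (Real.exp (φ θ)) * (Q.rnDeriv P θ)⁻¹)
              = ENNReal.ofReal (Real.exp (φ θ)) * (Q.rnDeriv P θ * (Q.rnDeriv P θ)⁻¹) := by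
                ring
            _ ≤ ENNReal.ofReal (Real.exp (φ θ)) * 1 :=
                mul_le_mul_right (ENNReal.mul_inv_le_one _) _
            _ = _ := mul_one _
      _ ≤ ENNReal.ofReal C := hint
  have hh_int : Integrable h Q := by
    refine ⟨hh_meas.aestronglyMeasurable, ?_⟩
    rw [hasFiniteIntegral_iff_ofReal (Filter.Eventually.of_forall hh_nonneg)]
    exact lt_of_le_of_lt hh_lint ENNReal.ofReal_lt_top
  have key : ∀ᵐ θ ∂Q, φ θ ≤ llr Q P θ + h θ := by
    filter_upwards [Measure.rnDeriv_pos hQP, hQP.ae_le (Measure.rnDeriv_lt_top Q P)]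
      with θ hpos hlt
    have ht : 0 < (Q.rnDeriv P θ).toReal := ENNReal.toReal_pos hpos.ne' hlt.ne
    have hx : φ θ - Real.log (Q.rnDeriv P θ).toReal ≤
        Real.exp (φ θ - Real.log (Q.rnDeriv P θ).toReal) := by
      linarith [Real.add_one_le_exp (φ θ - Real.log (Q.rnDeriv P θ).toReal)]
    rw [Real.exp_sub, Real.exp_log ht, div_eq_mul_inv] at hx
    have : llr Q P θ = Real.log (Q.rnDeriv P θ).toReal := rfl
    rw [hh_def]
    simp only [this]
    linarith
  have hφ_int : Integrable φ Q := by
    refine Integrable.mono' (hllr.abs.add hh_int) hφm.aestronglyMeasurable ?_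
    filter_upwards [key] with θ hθ
    rw [Real.norm_eq_abs, abs_of_nonneg (hφ0 θ)]
    calc φ θ ≤ llr Q P θ + h θ := hθ
      _ ≤ |llr Q P θ| + h θ := by linarith [le_abs_self (llr Q P θ)]
  refine ⟨hφ_int, ?_⟩
  have hC0pos : 0 < ∫ θ, Real.exp (φ θ) ∂P := integral_exp_pos hexp
  have hC0le : ∫ θ, Real.exp (φ θ) ∂P ≤ C := by
    rw [integral_eq_lintegral_of_nonneg_ae
      (Filter.Eventually.of_forall fun θ => (exp_pos _).le) hφm.exp.aestronglyMeasurable]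
    calc (∫⁻ θ, ENNReal.ofReal (Real.exp (φ θ)) ∂P).toReal
        ≤ (ENNReal.ofReal C).toReal := ENNReal.toReal_mono ENNReal.ofReal_ne_top hint
      _ = C := ENNReal.toReal_ofReal (by linarith)
  haveI : IsProbabilityMeasure (P.tilted φ) := isProbabilityMeasure_tilted hexp
  have hQP' : Q ≪ P.tilted φ := hQP.trans (absolutelyContinuous_tilted hexp)
  have hllr' : Integrable (llr Q (P.tilted φ)) Q :=
    integrable_llr_tilted_right hQP hφ_int hllr hexp
  have h0 : 0 ≤ ∫ θ, llr Q (P.tilted φ) θ ∂Q := aux_kl_nonneg Q (P.tilted φ) hQP' hllr'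
  have heq : ∫ θ, llr Q (P.tilted φ) θ ∂Q =
      ∫ θ, llr Q P θ ∂Q - ∫ θ, φ θ ∂Q + Real.log (∫ θ, Real.exp (φ θ) ∂P) :=
    integral_llr_tilted_right hQP hφ_int hexp hllr
  have hlog : Real.log (∫ θ, Real.exp (φ θ) ∂P) ≤ Real.log C :=
    Real.log_le_log hC0pos hC0le
  linarith [heq ▸ h0]

/-- Jensen: the integral of `f` is at most the square root of the integral of `f²`. -/
lemma aux_jensen {Θ : Type*} [MeasurableSpace Θ] (Q : Measure Θ)
    [IsProbabilityMeasure Q] {f : Θ → ℝ} (hm : AEStronglyMeasurable f Q)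
    (hsq : Integrable (fun θ => f θ ^ 2) Q) :
    ∫ θ, f θ ∂Q ≤ Real.sqrt (∫ θ, f θ ^ 2 ∂Q) := by
  have h2 : MemLp f 2 Q := (memLp_two_iff_integrable_sq hm).2 hsq
  have hvar := ProbabilityTheory.variance_nonneg f Q
  rw [ProbabilityTheory.variance_eq_sub h2] at hvar
  have hsq_le : (∫ θ, f θ ∂Q) ^ 2 ≤ ∫ θ, f θ ^ 2 ∂Q := by
    have h : ∫ x, (f ^ 2) x ∂Q = ∫ θ, f θ ^ 2 ∂Q := by
      simp [Pi.pow_apply]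
    rw [h] at hvar; linarith
  calc ∫ θ, f θ ∂Q ≤ |∫ θ, f θ ∂Q| := le_abs_self _
    _ = Real.sqrt ((∫ θ, f θ ∂Q) ^ 2) := (Real.sqrt_sq_eq_abs _).symm
    _ ≤ Real.sqrt (∫ θ, f θ ^ 2 ∂Q) := Real.sqrt_le_sqrt hsq_le

/-- Uniform-over-posteriors PAC-Bayes bound for variables with bounded exponential
square moment: with probability at least `1 - γ`, simultaneously for all posteriors `Q`,
`∫ Ψ(θ, ω) dQ(θ) ≤ √((KL(Q‖P) + log(2N/γ)) / (2(N-1)))` (the bound being trivially `+∞`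
when `KL(Q‖P) = ∞`). -/
theorem pac_bayes_sq_moment_bound
    {Ω Θ : Type*} [MeasurableSpace Ω] [MeasurableSpace Θ]
    (ν : Measure Ω) [IsProbabilityMeasure ν]
    (P : Measure Θ) [IsProbabilityMeasure P]
    (N : ℕ) (hN : 2 ≤ N) (γ : ℝ) (hγ : γ ∈ Set.Ioo (0 : ℝ) 1)
    (Ψ : Θ → Ω → ℝ) (hΨ : Measurable (Function.uncurry Ψ))
    (hmom : ∀ θ : Θ,
      ∫⁻ ω, ENNReal.ofReal (Real.exp (2 * ((N : ℝ) - 1) * (Ψ θ ω) ^ 2)) ∂ν ≤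
        ENNReal.ofReal (2 * (N : ℝ))) :
    ENNReal.ofReal (1 - γ) ≤
      ν {ω | ∀ Q : Measure Θ, IsProbabilityMeasure Q →
        klDivE Q P = ⊤ ∨
        ∫ θ, Ψ θ ω ∂Q ≤
          Real.sqrt (((klDivE Q P).toReal + Real.log (2 * (N : ℝ) / γ)) /
            (2 * ((N : ℝ) - 1)))} := by
  obtain ⟨hγ0, hγ1⟩ := hγ
  have hN2 : (2 : ℝ) ≤ (N : ℝ) := by exact_mod_cast hN
  have hc_pos : (0 : ℝ) < 2 * ((N : ℝ) - 1) := by linarith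
  set Φ : Θ → Ω → ℝ := fun θ ω => 2 * ((N : ℝ) - 1) * (Ψ θ ω) ^ 2 with hΦ_def
  have hprod_meas : Measurable (fun p : Ω × Θ => ENNReal.ofReal (Real.exp (Φ p.2 p.1))) := by
    have h1 : Measurable (fun p : Ω × Θ => Ψ p.2 p.1) := hΨ.comp measurable_swap
    exact ((measurable_const.mul (h1.pow_const 2)).exp).ennreal_ofReal
  set F : Ω → ENNReal := fun ω => ∫⁻ θ, ENNReal.ofReal (Real.exp (Φ θ ω)) ∂P with hF_def
  have hF_meas : Measurable F := hprod_meas.lintegral_prod_right'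
  have hFint : ∫⁻ ω, F ω ∂ν ≤ ENNReal.ofReal (2 * (N : ℝ)) := by
    have hswap : ∫⁻ ω, ∫⁻ θ, ENNReal.ofReal (Real.exp (Φ θ ω)) ∂P ∂ν =
        ∫⁻ θ, ∫⁻ ω, ENNReal.ofReal (Real.exp (Φ θ ω)) ∂ν ∂P :=
      lintegral_lintegral_swap hprod_meas.aemeasurable
    rw [hF_def]
    simp only
    rw [hswap]
    calc ∫⁻ θ, ∫⁻ ω, ENNReal.ofReal (Real.exp (Φ θ ω)) ∂ν ∂P
        ≤ ∫⁻ _, ENNReal.ofReal (2 * (N : ℝ)) ∂P := lintegral_mono fun θ => hmom θ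
      _ = ENNReal.ofReal (2 * (N : ℝ)) := by simp
  have hCpos : (0 : ℝ) < 2 * (N : ℝ) / γ := by positivity
  set ε : ENNReal := ENNReal.ofReal (2 * (N : ℝ) / γ) with hε_def
  have hε0 : ε ≠ 0 := (ENNReal.ofReal_pos.2 hCpos).ne'
  have hεt : ε ≠ ⊤ := ENNReal.ofReal_ne_top
  have hMarkov : ν {ω | ε ≤ F ω} ≤ ENNReal.ofReal γ := by
    refine (meas_ge_le_lintegral_div hF_meas.aemeasurable hε0 hεt).trans ?_
    rw [ENNReal.div_le_iff hε0 hεt]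
    refine hFint.trans ?_
    rw [← ENNReal.ofReal_mul hγ0.le]
    apply ENNReal.ofReal_le_ofReal
    rw [mul_div_assoc']
    rw [mul_comm γ (2 * (N : ℝ)), mul_div_assoc, div_self hγ0.ne', mul_one]
  have hgood : ENNReal.ofReal (1 - γ) ≤ ν {ω | F ω < ε} := by
    have hms : MeasurableSet {ω | ε ≤ F ω} := measurableSet_le measurable_const hF_meas
    have hcompl : {ω | F ω < ε} = {ω | ε ≤ F ω}ᶜ := by
      ext ω; simp [not_le]
    rw [hcompl, measure_compl hms (measure_ne_top _ _), measure_univ]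
    calc ENNReal.ofReal (1 - γ) = 1 - ENNReal.ofReal γ := by
          rw [← ENNReal.ofReal_one, ← ENNReal.ofReal_sub _ hγ0.le]
      _ ≤ 1 - ν {ω | ε ≤ F ω} := tsub_le_tsub_left hMarkov 1
  refine le_trans hgood (measure_mono ?_)
  intro ω hω Q hQ
  by_cases hkl : klDivE Q P = ⊤
  · exact Or.inl hkl
  right
  have hcond : Q ≪ P ∧ Integrable (llr Q P) Q := by
    by_contra h
    exact hkl (by simp [klDivE, h])
  obtain ⟨hQP, hllr⟩ := hcond
  have hklval : (klDivE Q P).toReal = ∫ θ, llr Q P θ ∂Q := by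
    simp [klDivE, hQP, hllr]
  have hC1 : 1 ≤ 2 * (N : ℝ) / γ := by
    rw [le_div_iff₀ hγ0]
    nlinarith
  have hΨω_meas : Measurable (fun θ => Ψ θ ω) :=
    hΨ.comp (measurable_id.prodMk measurable_const)
  have hφm : Measurable (fun θ => Φ θ ω) :=
    measurable_const.mul (hΨω_meas.pow_const 2)
  have hφ0 : ∀ θ, 0 ≤ Φ θ ω := fun θ => mul_nonneg (by linarith) (sq_nonneg _)
  obtain ⟨hφ_int, hdv⟩ := aux_dv hQP hllr hφm hφ0 hC1 (le_of_lt hω)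
  have hsq_int : Integrable (fun θ => (Ψ θ ω) ^ 2) Q := by
    have h := hφ_int.const_mul (2 * ((N : ℝ) - 1))⁻¹
    have heq : (fun θ => (Ψ θ ω) ^ 2) = fun θ => (2 * ((N : ℝ) - 1))⁻¹ * Φ θ ω := by
      funext θ
      rw [hΦ_def]
      have hN1 : (N : ℝ) - 1 ≠ 0 := (by linarith : (0:ℝ) < (N:ℝ) - 1).ne'
      field_simp
    rw [heq]
    exact h
  have hjen := aux_jensen Q hΨω_meas.aestronglyMeasurable hsq_int
  have hintφ : ∫ θ, Φ θ ω ∂Q = 2 * ((N : ℝ) - 1) * ∫ θ, (Ψ θ ω) ^ 2 ∂Q := by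
    rw [hΦ_def]
    exact integral_const_mul _ _
  have hb : ∫ θ, (Ψ θ ω) ^ 2 ∂Q ≤
      ((klDivE Q P).toReal + Real.log (2 * (N : ℝ) / γ)) / (2 * ((N : ℝ) - 1)) := by
    rw [hklval, le_div_iff₀ hc_pos]
    rw [hintφ] at hdv
    linarith [hdv]
  exact hjen.trans (Real.sqrt_le_sqrt hb)
end
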